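/- arXiv:1501.04074 — 2 statements merged into one kernel-verified Lean document; each statement's English description precedes it below -/
import Mathlib

section
/- For every natural number k and every ε > 0 there exists N such that every tournament T on n ≥ N vertices satisfies p(Tr_k, T) ≥ k!/2^{k(k−1)/2} − ε. Equivalently, for every sequence (T_j) of tournaments with |V(T_j)| → ∞, liminf_{j→∞} p(Tr_k, T_j) ≥ k!/2^{k(k−1)/2}. -/
/-- A tournament on `n` vertices: an irreflexive relation such that for every
pair of distinct vertices exactly one direction holds. -/
structure Tournament (n : ℕ) where
  rel : Fin n → Fin n → Bool
  irrefl : ∀ v, rel v v = false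
  total : ∀ u v, u ≠ v → rel u v = !rel v u

/-- The transitive tournament `Tr_k`. -/
def Tr (k : ℕ) : Tournament k where
  rel i j := decide (i < j)
  irrefl v := by simp
  total u v h := by
    rcases h.lt_or_gt with h' | h'
    · simp [h', h'.not_gt]
    · simp [h', h'.not_gt]

/-- The cyclic triangle. -/
def C3 : Tournament 3 where
  rel := ![![false, true, false], ![false, false, true], ![true, false, false]]
  irrefl := by decide
  total := by decide

/-- `W₄`: the non-transitive tournament on 4 vertices with a "winner". -/
def W4 : Tournament 4 where
  rel := ![![false, true, true, true], ![false, false, true, false],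
           ![false, false, false, true], ![false, true, false, false]]
  irrefl := by decide
  total := by decide

/-- `L₄`: the non-transitive tournament on 4 vertices with a "loser". -/
def L4 : Tournament 4 where
  rel := ![![false, true, false, true], ![false, false, true, true],
           ![true, false, false, true], ![false, false, false, false]]
  irrefl := by decide
  total := by decide

/-- `R₄`: the tournament on 4 vertices with out-degree sequence (1,1,2,2). -/
def R4 : Tournament 4 where
  rel := ![![false, true, true, false], ![false, false, true, true],
           ![false, false, false, true], ![true, false, false, false]]
  irrefl := by decide
  total := by decide

/-- Two tournaments on the same number of vertices are isomorphic if some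
permutation of the vertices carries one arc relation to the other. -/
def Isomorphic {k : ℕ} (S T : Tournament k) : Prop :=
  ∃ e : Equiv.Perm (Fin k), ∀ i j, S.rel i j = T.rel (e i) (e j)

/-- The subtournament of `T` induced on the subset `A` is isomorphic to `S`. -/
def IsoOn {k n : ℕ} (S : Tournament k) (T : Tournament n) (A : Finset (Fin n)) : Prop :=
  ∃ f : Fin k → Fin n, Function.Injective f ∧ Finset.univ.image f = A ∧
    ∀ i j, S.rel i j = T.rel (f i) (f j)

open scoped Classical in
/-- The number of `k`-element subsets of the vertex set of `T` whose induced
subtournament is isomorphic to `S` (where `S` has `k` vertices). -/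
noncomputable def copyCount {k n : ℕ} (S : Tournament k) (T : Tournament n) : ℕ :=
  ((Finset.powersetCard k (Finset.univ : Finset (Fin n))).filter (IsoOn S T)).card

/-- The (unlabelled) density `p(S, T)`. -/
noncomputable def density {k n : ℕ} (S : Tournament k) (T : Tournament n) : ℝ :=
  (copyCount S T : ℝ) / (n.choose k : ℝ)

/-- The number of automorphisms of a tournament. -/
def autCount {k : ℕ} (S : Tournament k) : ℕ :=
  (Finset.univ.filter
    (fun e : Equiv.Perm (Fin k) => ∀ i j, S.rel i j = S.rel (e i) (e j))).card

/-- A sequence of tournaments with growing vertex sets is quasi-random if every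
fixed tournament `S` on `k` vertices appears with density tending to
`k! / (|Aut S| * 2^(k(k-1)/2))`. -/
def QuasiRandom {nn : ℕ → ℕ} (T : ∀ j, Tournament (nn j)) : Prop :=
  ∀ (k : ℕ) (S : Tournament k),
    Filter.Tendsto (fun j => density S (T j)) Filter.atTop
      (nhds ((k.factorial : ℝ) / ((autCount S : ℝ) * 2 ^ (k * (k - 1) / 2))))

/-- `D(u,v) = #{w : u→w ∧ w→v}`. -/
def Dcount {n : ℕ} (T : Tournament n) (u v : Fin n) : ℕ :=
  (Finset.univ.filter (fun w => T.rel u w ∧ T.rel w v)).card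

/-- `C(u,v) = #{w : v→w ∧ w→u}`. -/
def Ccount {n : ℕ} (T : Tournament n) (u v : Fin n) : ℕ :=
  (Finset.univ.filter (fun w => T.rel v w ∧ T.rel w u)).card

/-- `I(u,v) = #{w : w→u ∧ w→v}`. -/
def Icount {n : ℕ} (T : Tournament n) (u v : Fin n) : ℕ :=
  (Finset.univ.filter (fun w => T.rel w u ∧ T.rel w v)).card

/-- `O(u,v) = #{w : u→w ∧ v→w}`. -/
def Ocount {n : ℕ} (T : Tournament n) (u v : Fin n) : ℕ :=
  (Finset.univ.filter (fun w => T.rel u w ∧ T.rel v w)).card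

/-- The subset `A` induces a transitive subtournament of `T`. -/
def IsTransOn {n : ℕ} (T : Tournament n) (A : Finset (Fin n)) : Prop :=
  ∀ u ∈ A, ∀ v ∈ A, ∀ w ∈ A, T.rel u v → T.rel v w → T.rel u w

open scoped Classical in
/-- `tr_m(T)`: the number of `m`-element subsets of the vertex set of `T`
inducing a transitive subtournament. -/
noncomputable def trCount (m : ℕ) {n : ℕ} (T : Tournament n) : ℕ :=
  ((Finset.powersetCard m (Finset.univ : Finset (Fin n))).filter (IsTransOn T)).card

/-- The subtournament of `T` induced on a subset `A` of its vertices. -/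
noncomputable def induce {n : ℕ} (T : Tournament n) (A : Finset (Fin n)) :
    Tournament A.card where
  rel i j := T.rel (A.orderIsoOfFin rfl i) (A.orderIsoOfFin rfl j)
  irrefl i := T.irrefl _
  total i j h := T.total _ _ (fun hc => h ((A.orderIsoOfFin rfl).injective (Subtype.ext hc)))

/-- The out-neighbourhood `N⁺(u)` of a vertex. -/
def outSet {n : ℕ} (T : Tournament n) (u : Fin n) : Finset (Fin n) :=
  Finset.univ.filter (fun w => T.rel u w)

/-- The out-degree of a vertex. -/
def outDeg {n : ℕ} (T : Tournament n) (v : Fin n) : ℕ :=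
  (Finset.univ.filter (fun w => T.rel v w)).card

/-- The multiset of out-degrees of a tournament. -/
def outDegs {n : ℕ} (T : Tournament n) : Multiset ℕ :=
  Finset.univ.val.map (outDeg T)

/-- The arc relation of `T` is transitive. -/
def IsTransitiveT {k : ℕ} (S : Tournament k) : Prop :=
  ∀ u v w, S.rel u v → S.rel v w → S.rel u w

open scoped Classical

namespace TDLB

variable {n : ℕ}

lemma rel_asymm (T : Tournament n) {u v : Fin n} (h : T.rel u v = true) :
    T.rel v u = false := by
  rcases eq_or_ne u v with rfl | hne
  · exact T.irrefl u
  · rw [T.total v u hne.symm, h]; rfl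

lemma rel_total' (T : Tournament n) {u v : Fin n} (hne : u ≠ v) (h : T.rel u v = false) :
    T.rel v u = true := by
  rw [T.total v u hne.symm, h]; rfl

lemma isTransOn_mono (T : Tournament n) {A B : Finset (Fin n)} (hBA : B ⊆ A)
    (hA : IsTransOn T A) : IsTransOn T B :=
  fun u hu v hv w hw h1 h2 => hA u (hBA hu) v (hBA hv) w (hBA hw) h1 h2

lemma exists_source (T : Tournament n) (A : Finset (Fin n)) (hne : A.Nonempty)
    (hA : IsTransOn T A) : ∃ v ∈ A, ∀ u ∈ A, u ≠ v → T.rel v u := by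
  induction hne using Finset.Nonempty.cons_induction with
  | singleton a => exact ⟨a, Finset.mem_singleton_self a, fun u hu hu' =>
      absurd (Finset.mem_singleton.1 hu) hu'⟩
  | cons a s ha hs ih =>
    obtain ⟨v, hv, hsrc⟩ := ih (isTransOn_mono T (Finset.subset_cons ha) hA)
    by_cases hav : T.rel a v = true
    · refine ⟨a, Finset.mem_cons_self a s, fun u hu hu' => ?_⟩
      rcases Finset.mem_cons.1 hu with rfl | hu
      · exact absurd rfl hu'
      · rcases eq_or_ne u v with rfl | huv
        · exact hav
        · exact hA a (Finset.mem_cons_self a s) v (Finset.mem_cons_of_mem hv) u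
            (Finset.mem_cons_of_mem hu) hav (hsrc u hu huv)
    · have hne' : a ≠ v := fun h => ha (h ▸ hv)
      have hva : T.rel v a = true :=
        rel_total' T hne' (Bool.not_eq_true _ ▸ hav : T.rel a v = false)
      refine ⟨v, Finset.mem_cons_of_mem hv, fun u hu hu' => ?_⟩
      rcases Finset.mem_cons.1 hu with rfl | hu
      · exact hva
      · exact hsrc u hu hu'

lemma source_unique (T : Tournament n) {A : Finset (Fin n)} {v w : Fin n}
    (hv : v ∈ A) (hw : w ∈ A)
    (hsv : ∀ u ∈ A, u ≠ v → T.rel v u) (hsw : ∀ u ∈ A, u ≠ w → T.rel w u) : v = w := by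
  by_contra hne
  have h1 : T.rel v w = true := hsv w hw (Ne.symm hne)
  have h2 : T.rel w v = true := hsw v hv hne
  rw [rel_asymm T h1] at h2
  exact Bool.false_ne_true h2

noncomputable def sourceOf (T : Tournament n) (A : Finset (Fin n)) : Option (Fin n) :=
  if h : ∃ v ∈ A, ∀ u ∈ A, u ≠ v → T.rel v u then some h.choose else none

lemma sourceOf_eq (T : Tournament n) {A : Finset (Fin n)} {v : Fin n} (hv : v ∈ A)
    (hsrc : ∀ u ∈ A, u ≠ v → T.rel v u) : sourceOf T A = some v := by
  have h : ∃ v ∈ A, ∀ u ∈ A, u ≠ v → T.rel v u := ⟨v, hv, hsrc⟩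
  rw [sourceOf, dif_pos h]
  obtain ⟨hc1, hc2⟩ := h.choose_spec
  exact congrArg some (source_unique T hc1 hv hc2 hsrc)

lemma sourceOf_spec (T : Tournament n) {A : Finset (Fin n)} {v : Fin n}
    (h : sourceOf T A = some v) : v ∈ A ∧ ∀ u ∈ A, u ≠ v → T.rel v u := by
  rw [sourceOf] at h
  split_ifs at h with h'
  · obtain ⟨hc1, hc2⟩ := h'.choose_spec
    cases Option.some_injective _ h
    exact ⟨hc1, hc2⟩

noncomputable def trCountOn (k : ℕ) {n : ℕ} (T : Tournament n) (W : Finset (Fin n)) : ℕ :=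
  ((Finset.powersetCard k W).filter (IsTransOn T)).card

lemma trCountOn_zero (T : Tournament n) (W : Finset (Fin n)) : trCountOn 0 T W = 1 := by
  rw [trCountOn, Finset.powersetCard_zero]
  rw [Finset.filter_true_of_mem, Finset.card_singleton]
  intro A hA
  rw [Finset.mem_singleton] at hA
  subst hA
  intro u hu; exact absurd hu (Finset.notMem_empty u)

lemma trCountOn_one (T : Tournament n) (W : Finset (Fin n)) : trCountOn 1 T W = W.card := by
  rw [trCountOn, Finset.filter_true_of_mem, Finset.card_powersetCard, Nat.choose_one_right]
  intro A hA
  rw [Finset.mem_powersetCard] at hA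
  obtain ⟨a, rfl⟩ := Finset.card_eq_one.1 hA.2
  intro u hu v hv w hw h1 _
  rw [Finset.mem_singleton] at hu hv
  subst hu; subst hv
  simp [T.irrefl] at h1

lemma trCountOn_succ (k : ℕ) (T : Tournament n) (W : Finset (Fin n)) :
    trCountOn (k+1) T W = ∑ v ∈ W, trCountOn k T (W ∩ outSet T v) := by
  rw [trCountOn]
  have H : ∀ A ∈ (Finset.powersetCard (k+1) W).filter (IsTransOn T),
      sourceOf T A ∈ W.map ⟨some, Option.some_injective _⟩ := by
    intro A hA
    rw [Finset.mem_filter, Finset.mem_powersetCard] at hA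
    obtain ⟨⟨hAW, hcard⟩, htr⟩ := hA
    have hne : A.Nonempty := Finset.card_pos.1 (hcard ▸ Nat.succ_pos k)
    obtain ⟨s, hs, hsrc⟩ := exists_source T A hne htr
    rw [sourceOf_eq T hs hsrc]
    exact Finset.mem_map_of_mem _ (hAW hs)
  rw [Finset.card_eq_sum_card_fiberwise H, Finset.sum_map]
  refine Finset.sum_congr rfl fun v hv => ?_
  rw [trCountOn]
  apply Finset.card_bij (fun A _ => A.erase v)
  · intro A hA
    rw [Finset.mem_filter] at hA
    obtain ⟨hA', hsv⟩ := hA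
    rw [Finset.mem_filter, Finset.mem_powersetCard] at hA'
    obtain ⟨⟨hAW, hcard⟩, htr⟩ := hA'
    obtain ⟨hvA, hsrc⟩ := sourceOf_spec T hsv
    rw [Finset.mem_filter, Finset.mem_powersetCard]
    refine ⟨⟨fun u hu => ?_, ?_⟩, isTransOn_mono T (Finset.erase_subset v A) htr⟩
    · rw [Finset.mem_erase] at hu
      rw [Finset.mem_inter]
      refine ⟨hAW hu.2, ?_⟩
      rw [outSet, Finset.mem_filter]
      exact ⟨Finset.mem_univ u, hsrc u hu.2 hu.1⟩
    · rw [Finset.card_erase_of_mem hvA, hcard]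
      omega
  · intro A1 hA1 A2 hA2 h
    rw [Finset.mem_filter] at hA1 hA2
    have hv1 : v ∈ A1 := (sourceOf_spec T hA1.2).1
    have hv2 : v ∈ A2 := (sourceOf_spec T hA2.2).1
    rw [← Finset.insert_erase hv1, ← Finset.insert_erase hv2, h]
  · intro B hB
    rw [Finset.mem_filter, Finset.mem_powersetCard] at hB
    obtain ⟨⟨hBsub, hBcard⟩, hBtr⟩ := hB
    have hrelB : ∀ u ∈ B, T.rel v u = true := by
      intro u hu
      have := (Finset.mem_inter.1 (hBsub hu)).2
      rw [outSet, Finset.mem_filter] at this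
      exact this.2
    have hvB : v ∉ B := by
      intro hvB
      have := hrelB v hvB
      rw [T.irrefl v] at this
      exact Bool.false_ne_true this
    have hsrc : ∀ u ∈ insert v B, u ≠ v → T.rel v u := by
      intro u hu hu'
      rcases Finset.mem_insert.1 hu with rfl | hu
      · exact absurd rfl hu'
      · exact hrelB u hu
    have htrA : IsTransOn T (insert v B) := by
      intro u1 h1 u2 h2 u3 h3 r12 r23
      obtain h1' | h1' := Finset.mem_insert.1 h1
      · obtain h2' | h2' := Finset.mem_insert.1 h2
        · rw [h1', h2', T.irrefl] at r12
          exact absurd r12 Bool.false_ne_true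
        · obtain h3' | h3' := Finset.mem_insert.1 h3
          · rw [h3', rel_asymm T (hrelB u2 h2')] at r23
            exact absurd r23 Bool.false_ne_true
          · rw [h1']
            exact hrelB u3 h3'
      · obtain h2' | h2' := Finset.mem_insert.1 h2
        · rw [h2', rel_asymm T (hrelB u1 h1')] at r12
          exact absurd r12 Bool.false_ne_true
        · obtain h3' | h3' := Finset.mem_insert.1 h3
          · rw [h3', rel_asymm T (hrelB u2 h2')] at r23
            exact absurd r23 Bool.false_ne_true
          · exact hBtr u1 h1' u2 h2' u3 h3' r12 r23
    refine ⟨insert v B, ?_, Finset.erase_insert hvB⟩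
    rw [Finset.mem_filter, Finset.mem_filter, Finset.mem_powersetCard]
    refine ⟨⟨⟨Finset.insert_subset hv (fun u hu => (Finset.mem_inter.1 (hBsub hu)).1), ?_⟩, htrA⟩,
      sourceOf_eq T (Finset.mem_insert_self v B) hsrc⟩
    rw [Finset.card_insert_of_notMem hvB, hBcard]

lemma sum_deg (T : Tournament n) (W : Finset (Fin n)) :
    2 * ∑ v ∈ W, (W ∩ outSet T v).card = W.card * (W.card - 1) := by
  classical
  set P := (W ×ˢ W).filter (fun p => T.rel p.1 p.2 = true) with hP
  set P' := (W ×ˢ W).filter (fun p => T.rel p.2 p.1 = true) with hP'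
  have stepA : ∑ v ∈ W, (W ∩ outSet T v).card = P.card := by
    rw [Finset.card_eq_sum_card_fiberwise
      (f := Prod.fst) (t := W)
      (fun p hp => (Finset.mem_product.1 (Finset.mem_filter.1 hp).1).1)]
    refine Finset.sum_congr rfl fun v hv => ?_
    apply Finset.card_bij (fun u _ => (v, u))
    · intro u hu
      simp only [Finset.mem_inter, outSet, Finset.mem_filter, Finset.mem_univ, true_and] at hu
      simp only [Finset.mem_filter, Finset.mem_product]
      exact ⟨⟨⟨hv, hu.1⟩, hu.2⟩, trivial⟩
    · intro u1 _ u2 _ h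
      exact congrArg Prod.snd h
    · intro p hp
      simp only [Finset.mem_filter, Finset.mem_product] at hp
      obtain ⟨⟨⟨hp1, hp2⟩, hrel⟩, hfst⟩ := hp
      refine ⟨p.2, ?_, ?_⟩
      · simp only [Finset.mem_inter, outSet, Finset.mem_filter, Finset.mem_univ, true_and]
        exact ⟨hp2, hfst ▸ hrel⟩
      · rw [← hfst]
  have hPP' : P.card = P'.card := by
    apply Finset.card_bij (fun p _ => (p.2, p.1))
    · intro p hp
      simp only [hP, hP', Finset.mem_filter, Finset.mem_product] at hp ⊢
      exact ⟨⟨hp.1.2, hp.1.1⟩, hp.2⟩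
    · intro p1 _ p2 _ h
      exact Prod.ext (congrArg Prod.snd h) (congrArg Prod.fst h)
    · intro p hp
      simp only [hP, hP', Finset.mem_filter, Finset.mem_product] at hp ⊢
      exact ⟨(p.2, p.1), ⟨⟨hp.1.2, hp.1.1⟩, hp.2⟩, rfl⟩
  have hunion : P ∪ P' = (W ×ˢ W).filter (fun p => p.1 ≠ p.2) := by
    rw [hP, hP', ← Finset.filter_or]
    apply Finset.filter_congr
    intro p hp
    constructor
    · rintro (h | h) heq
      · rw [heq, T.irrefl] at h; exact Bool.false_ne_true h
      · rw [heq, T.irrefl] at h; exact Bool.false_ne_true h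
    · intro hne
      by_cases h : T.rel p.1 p.2 = true
      · exact Or.inl h
      · exact Or.inr (rel_total' T hne (Bool.not_eq_true _ ▸ h))
  have hdisj : Disjoint P P' := by
    rw [Finset.disjoint_left]
    intro p hp hp'
    simp only [hP, hP', Finset.mem_filter] at hp hp'
    rw [rel_asymm T hp.2] at hp'
    exact Bool.false_ne_true hp'.2
  have hoff : ((W ×ˢ W).filter (fun p => p.1 ≠ p.2)).card = W.card * (W.card - 1) := by
    rw [Finset.card_eq_sum_card_fiberwise
      (f := Prod.fst) (t := W)
      (fun p hp => (Finset.mem_product.1 (Finset.mem_filter.1 hp).1).1)]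
    rw [Finset.sum_congr rfl (g := fun v => W.card - 1) ?_, Finset.sum_const, smul_eq_mul]
    intro v hv
    have heq : (((W ×ˢ W).filter (fun p => p.1 ≠ p.2)).filter fun p => p.1 = v).card
        = (W.erase v).card := by
      apply Finset.card_bij (fun p _ => p.2)
      · intro p hp
        simp only [Finset.mem_filter, Finset.mem_product] at hp
        rw [Finset.mem_erase]
        exact ⟨fun h => hp.1.2 (hp.2.trans h.symm), hp.1.1.2⟩
      · intro p1 hp1 p2 hp2 h
        simp only [Finset.mem_filter] at hp1 hp2
        exact Prod.ext (hp1.2.trans hp2.2.symm) h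
      · intro u hu
        rw [Finset.mem_erase] at hu
        refine ⟨(v, u), ?_, rfl⟩
        simp only [Finset.mem_filter, Finset.mem_product]
        exact ⟨⟨⟨hv, hu.2⟩, fun h => hu.1 h.symm⟩, trivial⟩
    rw [heq, Finset.card_erase_of_mem hv]
  have hcard := Finset.card_union_of_disjoint hdisj
  rw [hunion, hoff, ← hPP'] at hcard
  rw [stepA]
  omega

lemma expo_succ (k : ℕ) : (k+2)*(k+1)/2 = (k+1)*k/2 + (k+1) := by
  obtain ⟨t, ht⟩ := Nat.even_mul_succ_self k
  have h2 : (k+2)*(k+1) = k*(k+1) + 2*(k+1) := by ring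
  have h1 : (k+1)*k = k*(k+1) := mul_comm _ _
  rw [h2, h1, ht]
  omega

lemma sum_deg_real (T : Tournament n) (W : Finset (Fin n)) :
    ∑ v ∈ W, (((W ∩ outSet T v).card : ℝ)) = (W.card : ℝ) * ((W.card : ℝ) - 1)/2 := by
  have h := sum_deg T W
  rcases Nat.eq_zero_or_pos W.card with h0 | h1
  · rw [Finset.card_eq_zero] at h0
    subst h0
    simp
  · have h' := congrArg (Nat.cast (R := ℝ)) h
    push_cast [Nat.cast_sub h1] at h'
    linarith

lemma main_step (k : ℕ)
    (ih : ∀ {n : ℕ} (T : Tournament n) (W : Finset (Fin n)),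
      (((W.card : ℝ) - (2^(k+1) - 1)) ⊔ 0)^(k+1) / 2^((k+1)*k/2) ≤ (trCountOn (k+1) T W : ℝ)) :
    ∀ {n : ℕ} (T : Tournament n) (W : Finset (Fin n)),
      (((W.card : ℝ) - (2^(k+2) - 1)) ⊔ 0)^(k+2) / 2^((k+2)*(k+1)/2) ≤
        (trCountOn (k+2) T W : ℝ) := by
  intro n T W
  have hrec : trCountOn (k+2) T W = ∑ v ∈ W, trCountOn (k+1) T (W ∩ outSet T v) :=
    trCountOn_succ (k+1) T W
  set m : ℕ := W.card with hm
  set b : ℝ := 2^(k+1) - 1 with hb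
  have hcb : (2:ℝ)^(k+2) - 1 = 2*b + 1 := by
    rw [hb, pow_succ]; ring
  set D : ℕ := (k+1)*k/2 with hD
  by_cases hmc : (m : ℝ) ≤ 2^(k+2) - 1
  · have hs : ((m:ℝ) - (2^(k+2) - 1)) ⊔ 0 = 0 := sup_eq_right.2 (by linarith)
    rw [hs, zero_pow (by omega), zero_div]
    positivity
  · push_neg at hmc
    have h2p : (1:ℝ) ≤ 2^(k+2) := one_le_pow₀ (by norm_num)
    have hm0 : (0:ℝ) < m := by linarith
    have hm0' : (m:ℝ) ≠ 0 := ne_of_gt hm0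
    set f : Fin n → ℝ := fun v => (((W ∩ outSet T v).card : ℝ) - b) ⊔ 0 with hf
    have hf0 : ∀ v ∈ W, 0 ≤ f v := fun v _ => le_sup_right
    set X : ℝ := (m:ℝ) - (2^(k+2) - 1) with hX
    have hXpos : 0 ≤ X := by rw [hX]; linarith
    have hss : (m:ℝ) * X / 2 ≤ ∑ v ∈ W, f v := by
      have h1 : ∑ v ∈ W, (((W ∩ outSet T v).card : ℝ) - b) ≤ ∑ v ∈ W, f v :=
        Finset.sum_le_sum (fun v _ => le_sup_left)
      rw [Finset.sum_sub_distrib, Finset.sum_const, nsmul_eq_mul, sum_deg_real T W] at h1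
      have e : (m:ℝ) * X / 2 = (m:ℝ)*((m:ℝ)-1)/2 - (m:ℝ)*b := by
        rw [hX, hcb]; ring
      rw [e]
      linarith [h1]
    have hS0 : (0:ℝ) ≤ (m:ℝ) * X / 2 := by positivity
    have hJ := pow_sum_div_card_le_sum_pow (s := W) (f := f) hf0 k
    have hpow : ((m:ℝ) * X / 2)^(k+1) ≤ (∑ v ∈ W, f v)^(k+1) :=
      pow_le_pow_left₀ hS0 hss _
    have key1 : (m:ℝ) * X^(k+1) / 2^(k+1) ≤ ∑ v ∈ W, f v ^ (k+1) := by
      have e2 : (m:ℝ) * X^(k+1) / 2^(k+1) = ((m:ℝ) * X / 2)^(k+1) / (m:ℝ)^k := by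
        rw [div_pow, mul_pow, pow_succ (m:ℝ) k]
        field_simp
      rw [e2]
      calc ((m:ℝ) * X / 2)^(k+1) / (m:ℝ)^k
          ≤ (∑ v ∈ W, f v)^(k+1) / (m:ℝ)^k := (div_le_div_iff_of_pos_right (by positivity)).2 hpow
        _ ≤ ∑ v ∈ W, f v ^ (k+1) := hJ
    have key2 : X^(k+2) ≤ (m:ℝ) * X^(k+1) := by
      have hXm : X ≤ (m:ℝ) := by rw [hX]; linarith
      calc X^(k+2) = X^(k+1) * X := pow_succ X (k+1)
        _ ≤ X^(k+1) * m := mul_le_mul_of_nonneg_left hXm (pow_nonneg hXpos _)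
        _ = (m:ℝ) * X^(k+1) := mul_comm _ _
    have hexp : (k+2)*(k+1)/2 = D + (k+1) := by rw [hD]; exact expo_succ k
    rw [sup_eq_left.2 hXpos, hexp, hrec, Nat.cast_sum]
    have hsum1 : ∑ v ∈ W, f v ^ (k+1) / 2^D ≤
        ∑ v ∈ W, ((trCountOn (k+1) T (W ∩ outSet T v) : ℝ)) :=
      Finset.sum_le_sum (fun v _ => ih T _)
    calc X^(k+2) / 2^(D + (k+1))
        = (X^(k+2) / 2^(k+1)) / 2^D := by rw [pow_add]; ring
      _ ≤ (((m:ℝ) * X^(k+1)) / 2^(k+1)) / 2^D := by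
          exact (div_le_div_iff_of_pos_right (by positivity)).2 ((div_le_div_iff_of_pos_right (by positivity)).2 key2)
      _ ≤ (∑ v ∈ W, f v ^ (k+1)) / 2^D := (div_le_div_iff_of_pos_right (by positivity)).2 key1
      _ = ∑ v ∈ W, f v ^ (k+1) / 2^D := by rw [Finset.sum_div]
      _ ≤ _ := hsum1

lemma main_bound (k : ℕ) : ∀ {n : ℕ} (T : Tournament n) (W : Finset (Fin n)),
    (((W.card : ℝ) - (2^k - 1)) ⊔ 0)^k / 2^(k*(k-1)/2) ≤ (trCountOn k T W : ℝ) := by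
  induction k with
  | zero => intro n T W; simp [trCountOn_zero]
  | succ k ih =>
    obtain _ | k := k
    · intro n T W
      rw [trCountOn_one]
      have h : ((W.card : ℝ) - (2^1 - 1)) ⊔ 0 ≤ (W.card : ℝ) := by
        apply sup_le (by simp) (by positivity)
      simpa using h
    · intro n T W
      exact main_step k (fun {n'} T' W' => ih T' W') T W

lemma exists_enum (T : Tournament n) :
    ∀ (k : ℕ) (A : Finset (Fin n)), A.card = k → IsTransOn T A →
    ∃ f : Fin k → Fin n, Function.Injective f ∧ Finset.univ.image f = A ∧
      ∀ i j : Fin k, i < j → T.rel (f i) (f j) = true := by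
  intro k
  induction k with
  | zero =>
    intro A hcard htr
    refine ⟨Fin.elim0, fun i => i.elim0, ?_, fun i => i.elim0⟩
    rw [Finset.card_eq_zero] at hcard
    subst hcard
    simp
  | succ k ih =>
    intro A hcard htr
    have hne : A.Nonempty := Finset.card_pos.1 (hcard ▸ Nat.succ_pos k)
    obtain ⟨v, hv, hsrc⟩ := exists_source T A hne htr
    have hcard' : (A.erase v).card = k := by
      rw [Finset.card_erase_of_mem hv, hcard]
      omega
    obtain ⟨f', hinj', himg', hrel'⟩ :=
      ih (A.erase v) hcard' (isTransOn_mono T (Finset.erase_subset v A) htr)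
    have hmem' : ∀ i' : Fin k, f' i' ∈ A.erase v := fun i' =>
      himg' ▸ Finset.mem_image_of_mem f' (Finset.mem_univ i')
    refine ⟨Fin.cons v f', ?_, ?_, ?_⟩
    · intro i j h
      rcases Fin.eq_zero_or_eq_succ i with rfl | ⟨i', rfl⟩ <;>
        rcases Fin.eq_zero_or_eq_succ j with rfl | ⟨j', rfl⟩
      · rfl
      · exfalso
        rw [Fin.cons_zero, Fin.cons_succ] at h
        exact (Finset.mem_erase.1 (hmem' j')).1 h.symm
      · exfalso
        rw [Fin.cons_succ, Fin.cons_zero] at h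
        exact (Finset.mem_erase.1 (hmem' i')).1 h
      · rw [Fin.cons_succ, Fin.cons_succ] at h
        rw [hinj' h]
    · ext u
      simp only [Finset.mem_image, Finset.mem_univ, true_and]
      constructor
      · rintro ⟨i, rfl⟩
        rcases Fin.eq_zero_or_eq_succ i with rfl | ⟨i', rfl⟩
        · rw [Fin.cons_zero]; exact hv
        · rw [Fin.cons_succ]
          exact Finset.mem_of_mem_erase (hmem' i')
      · intro hu
        by_cases huv : u = v
        · exact ⟨0, by rw [Fin.cons_zero, huv]⟩
        · have hm : u ∈ A.erase v := Finset.mem_erase.2 ⟨huv, hu⟩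
          rw [← himg'] at hm
          obtain ⟨i', -, hfi⟩ := Finset.mem_image.1 hm
          exact ⟨i'.succ, by rw [Fin.cons_succ, hfi]⟩
    · intro i j hij
      rcases Fin.eq_zero_or_eq_succ j with rfl | ⟨j', rfl⟩
      · exact absurd hij (by simp)
      · rcases Fin.eq_zero_or_eq_succ i with rfl | ⟨i', rfl⟩
        · rw [Fin.cons_zero, Fin.cons_succ]
          exact hsrc _ (Finset.mem_of_mem_erase (hmem' j')) (Finset.mem_erase.1 (hmem' j')).1
        · rw [Fin.cons_succ, Fin.cons_succ]
          exact hrel' i' j' (by rwa [Fin.succ_lt_succ_iff] at hij)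

lemma isoOn_iff {k : ℕ} (T : Tournament n) (A : Finset (Fin n)) (hcard : A.card = k) :
    IsoOn (Tr k) T A ↔ IsTransOn T A := by
  constructor
  · rintro ⟨f, hinj, himg, hrel⟩
    intro u hu v hv w hw ruv rvw
    rw [← himg] at hu hv hw
    obtain ⟨i, -, rfl⟩ := Finset.mem_image.1 hu
    obtain ⟨j, -, rfl⟩ := Finset.mem_image.1 hv
    obtain ⟨l, -, rfl⟩ := Finset.mem_image.1 hw
    have hTr : ∀ a b : Fin k, (Tr k).rel a b = decide (a < b) := fun a b => rfl
    have hij : i < j := by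
      have h := (hrel i j).symm.trans (hTr i j)
      rw [ruv] at h
      exact of_decide_eq_true h.symm
    have hjl : j < l := by
      have h := (hrel j l).symm.trans (hTr j l)
      rw [rvw] at h
      exact of_decide_eq_true h.symm
    have h := (hrel i l).symm.trans (hTr i l)
    rw [h]
    exact decide_eq_true (hij.trans hjl)
  · intro htrans
    obtain ⟨f, hinj, himg, hord⟩ := exists_enum T k A hcard htrans
    refine ⟨f, hinj, himg, ?_⟩
    intro i j
    have hTr : (Tr k).rel i j = decide (i < j) := rfl
    rw [hTr]
    by_cases h : i < j
    · rw [decide_eq_true h, hord i j h]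
    · rw [decide_eq_false h]
      rcases eq_or_ne i j with rfl | hne
      · exact (T.irrefl _).symm
      · have hji : j < i := (lt_or_gt_of_ne hne).resolve_left h
        exact (rel_asymm T (hord j i hji)).symm

end TDLB

/-- for every `k` and `ε > 0`, every sufficiently large tournament
satisfies `p(Tr_k, T) ≥ k!/2^(k(k-1)/2) - ε`; equivalently, for every sequence of
tournaments with `|V(T_j)| → ∞`, `liminf p(Tr_k, T_j) ≥ k!/2^(k(k-1)/2)`. -/
theorem transitive_density_lower_bound (k : ℕ) :
    (∀ ε : ℝ, 0 < ε → ∃ N : ℕ, ∀ n : ℕ, N ≤ n → ∀ T : Tournament n,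
      (k.factorial : ℝ) / 2 ^ (k * (k - 1) / 2) - ε ≤ density (Tr k) T) ∧
    (∀ (nn : ℕ → ℕ) (T : ∀ j, Tournament (nn j)),
      Filter.Tendsto nn Filter.atTop Filter.atTop →
      (k.factorial : ℝ) / 2 ^ (k * (k - 1) / 2) ≤
        Filter.liminf (fun j => density (Tr k) (T j)) Filter.atTop) := by
  classical
  have copyEq : ∀ {n : ℕ} (T : Tournament n),
      copyCount (Tr k) T = TDLB.trCountOn k T Finset.univ := by
    intro n T
    rw [copyCount, TDLB.trCountOn]
    congr 1
    apply Finset.filter_congr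
    intro A hA
    rw [Finset.mem_powersetCard] at hA
    exact TDLB.isoOn_iff T A hA.2
  have density_le_one : ∀ {n : ℕ} (T : Tournament n), density (Tr k) T ≤ 1 := by
    intro n T
    rw [density]
    apply div_le_one_of_le₀
    · have h1 : copyCount (Tr k) T ≤ (Finset.powersetCard k (Finset.univ : Finset (Fin n))).card :=
        Finset.card_filter_le _ _
      rw [Finset.card_powersetCard, Finset.card_univ, Fintype.card_fin] at h1
      exact_mod_cast h1
    · positivity
  have part1 : ∀ ε : ℝ, 0 < ε → ∃ N : ℕ, ∀ n : ℕ, N ≤ n → ∀ T : Tournament n,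
      (k.factorial : ℝ) / 2 ^ (k * (k - 1) / 2) - ε ≤ density (Tr k) T := by
    intro ε hε
    refine ⟨2^k * (k+1) + (⌈((k.factorial * (k * 2^k) : ℕ) : ℝ)/ε⌉₊ + 1), ?_⟩
    intro n hn T
    set D : ℕ := k * (k-1)/2 with hD
    set c : ℝ := (k.factorial : ℝ)/2^D with hc
    set B : ℝ := 2^k - 1 with hB
    set R : ℝ := (n : ℝ) with hR
    have h2k : (1:ℝ) ≤ 2^k := one_le_pow₀ (by norm_num)
    have hB0 : 0 ≤ B := by rw [hB]; linarith
    have hBle : B ≤ 2^k := by rw [hB]; linarith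
    have hn1 : 2^k * (k+1) ≤ n := le_trans (Nat.le_add_right _ _) hn
    have hkn : k < n := by
      calc k < 2^k := Nat.lt_two_pow_self
        _ ≤ 2^k * (k+1) := Nat.le_mul_of_pos_right _ (Nat.succ_pos k)
        _ ≤ n := hn1
    have hnk2 : 2^k * k ≤ n :=
      le_trans (Nat.mul_le_mul_left _ (Nat.le_succ k)) hn1
    have hn2k : (2:ℝ)^k ≤ R := by
      have h1 : (2^k : ℕ) ≤ n := le_trans (Nat.le_mul_of_pos_right _ (Nat.succ_pos k)) hn1
      rw [hR]
      exact_mod_cast h1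
    have hRpos : (0:ℝ) < R := by
      have h0 : 0 < n := lt_of_le_of_lt (Nat.zero_le k) hkn
      rw [hR]
      exact_mod_cast h0
    have hRB : B < R := by rw [hB]; linarith
    have hC : (0:ℝ) < (n.choose k : ℝ) := by
      exact_mod_cast Nat.choose_pos (le_of_lt hkn)
    have hmain := TDLB.main_bound k T (Finset.univ : Finset (Fin n))
    rw [Finset.card_univ, Fintype.card_fin] at hmain
    have hsup : ((n:ℝ) - (2^k - 1)) ⊔ 0 = R - B := by
      rw [← hR, ← hB]
      exact sup_eq_left.2 (by linarith)
    rw [hsup] at hmain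
    have hdens : density (Tr k) T = ((copyCount (Tr k) T : ℝ))/(n.choose k : ℝ) := rfl
    have hstep0 : (R - B)^k / 2^D / (n.choose k : ℝ) ≤ density (Tr k) T := by
      rw [hdens, copyEq T]
      exact (div_le_div_iff_of_pos_right hC).2 hmain
    refine le_trans ?_ hstep0
    have hdesc : (k.factorial : ℝ) * (n.choose k : ℝ) ≤ R^k := by
      have h1 : k.factorial * n.choose k = n.descFactorial k :=
        (Nat.descFactorial_eq_factorial_mul_choose n k).symm
      have h2 : n.descFactorial k ≤ n^k := Nat.descFactorial_le_pow n k
      have h3 := le_trans (le_of_eq h1) h2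
      rw [hR]
      exact_mod_cast h3
    have hbern : R^k * (1 - k*(B/R)) ≤ (R - B)^k := by
      have hBR1 : B/R ≤ 1 := div_le_one_of_le₀ (le_of_lt hRB) (le_of_lt hRpos)
      have hBR0 : 0 ≤ B/R := div_nonneg hB0 (le_of_lt hRpos)
      have h1 : (1:ℝ) + k*(-(B/R)) ≤ (1 + -(B/R))^k :=
        one_add_mul_le_pow (by linarith) k
      have h2 : R^k * ((1:ℝ) + k*(-(B/R))) ≤ R^k * (1 + -(B/R))^k :=
        mul_le_mul_of_nonneg_left h1 (pow_nonneg (le_of_lt hRpos) k)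
      have h3 : R^k * (1 + -(B/R))^k = (R - B)^k := by
        rw [← mul_pow]
        congr 1
        field_simp
        ring
      calc R^k * (1 - k*(B/R)) = R^k * (1 + k*(-(B/R))) := by ring
        _ ≤ R^k * (1 + -(B/R))^k := h2
        _ = (R-B)^k := h3
    have hkB : (k:ℝ)*B ≤ R := by
      have h1 : ((2^k * k : ℕ) : ℝ) ≤ R := by rw [hR]; exact_mod_cast hnk2
      push_cast at h1
      have hk0 : (0:ℝ) ≤ k := Nat.cast_nonneg k
      nlinarith
    have hposfac : 0 ≤ 1 - (k:ℝ)*(B/R) := by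
      rw [sub_nonneg]
      have e : (k:ℝ)*(B/R) = ((k:ℝ)*B)/R := by ring
      rw [e, div_le_one hRpos]
      exact hkB
    have hmid : c * (1 - k*(B/R)) ≤ (R - B)^k / 2^D / (n.choose k : ℝ) := by
      rw [div_div, le_div_iff₀ (by positivity)]
      have e : c * (1 - k*(B/R)) * (2^D * (n.choose k:ℝ))
          = (k.factorial : ℝ) * (n.choose k : ℝ) * (1 - k*(B/R)) := by
        rw [hc]; field_simp
      rw [e]
      calc (k.factorial : ℝ) * (n.choose k:ℝ) * (1-k*(B/R))
          ≤ R^k * (1-k*(B/R)) := mul_le_mul_of_nonneg_right hdesc hposfac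
        _ ≤ (R-B)^k := hbern
    refine le_trans ?_ hmid
    have hcfac : c ≤ (k.factorial : ℝ) := by
      rw [hc]
      exact div_le_self (by positivity) (one_le_pow₀ (by norm_num))
    have hceil : (⌈((k.factorial * (k * 2^k) : ℕ) : ℝ)/ε⌉₊ : ℝ) ≤ R := by
      have h1 : ⌈((k.factorial * (k * 2^k) : ℕ) : ℝ)/ε⌉₊ ≤ n := by omega
      rw [hR]
      exact_mod_cast h1
    have hMn : ((k.factorial * (k * 2^k) : ℕ) : ℝ) ≤ ε * R := by
      have h1 := Nat.le_ceil (((k.factorial * (k * 2^k) : ℕ) : ℝ)/ε)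
      rw [div_le_iff₀ hε] at h1
      calc ((k.factorial * (k * 2^k) : ℕ) : ℝ)
          ≤ (⌈((k.factorial * (k * 2^k) : ℕ) : ℝ)/ε⌉₊ : ℝ) * ε := h1
        _ ≤ R * ε := mul_le_mul_of_nonneg_right hceil (le_of_lt hε)
        _ = ε * R := mul_comm _ _
    have final : c * ((k:ℝ)*(B/R)) ≤ ε := by
      have e : c*((k:ℝ)*(B/R)) = (c*k*B)/R := by ring
      rw [e, div_le_iff₀ hRpos]
      have hk0 : (0:ℝ) ≤ k := Nat.cast_nonneg k
      have hc0 : 0 ≤ c := by rw [hc]; positivity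
      have s1 : c*(k:ℝ) ≤ (k.factorial:ℝ)*k := mul_le_mul_of_nonneg_right hcfac hk0
      have s2 : c*(k:ℝ)*B ≤ ((k.factorial:ℝ)*k)*B :=
        mul_le_mul_of_nonneg_right s1 hB0
      have s3 : ((k.factorial:ℝ)*k)*B ≤ ((k.factorial:ℝ)*k)*2^k :=
        mul_le_mul_of_nonneg_left hBle (by positivity)
      have s4 : ((k.factorial:ℝ)*k)*2^k = (k.factorial:ℝ)*(k*2^k) := by ring
      have h1 : c*(k:ℝ)*B ≤ (k.factorial:ℝ)*((k:ℝ)*2^k) := by linarith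
      have h2 : (k.factorial:ℝ)*(k*2^k) = ((k.factorial * (k * 2^k) : ℕ):ℝ) := by
        push_cast; ring
      linarith
    have expand : c*(1-(k:ℝ)*(B/R)) = c - c*((k:ℝ)*(B/R)) := by ring
    linarith
  refine ⟨part1, ?_⟩
  intro nn T hnn
  apply le_of_forall_sub_le
  intro ε hε
  obtain ⟨N, hN⟩ := part1 ε hε
  apply Filter.le_liminf_of_le
  · exact Filter.isCoboundedUnder_ge_of_le Filter.atTop (x := 1)
      (fun j => density_le_one (T j))
  · filter_upwards [hnn.eventually_ge_atTop N] with j hj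
    exact hN (nn j) hj (T j)
end

section
/- Fix k ≥ 4. If a sequence (T_j) of tournaments with |V(T_j)| → ∞ satisfies p(Tr_k, T_j) → k!/2^{k(k−1)/2}, then p(Tr_3, T_j) → 3/4 as j → ∞. -/
/-! ### Auxiliary development -/

open Finset

namespace Tournament

variable {n : ℕ} (T : Tournament n)

lemma asym {u v : Fin n} (h : T.rel u v = true) : T.rel v u = false := by
  by_cases huv : u = v
  · subst huv; exact T.irrefl u
  · have := T.total u v huv
    rw [this] at h
    simpa using h

lemma rel_of_ne_of_not {u v : Fin n} (huv : u ≠ v) (h : T.rel u v = false) :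
    T.rel v u = true := by
  have := T.total u v huv
  rw [h] at this
  simpa using this.symm

open scoped Classical in
/-- Number of `m`-subsets of `A` inducing a transitive subtournament. -/
noncomputable def sCount (m : ℕ) (A : Finset (Fin n)) : ℕ :=
  ((Finset.powersetCard m A).filter (IsTransOn T)).card

lemma trCount_eq_sCount (m : ℕ) : trCount m T = T.sCount m Finset.univ := rfl

/-- Monotonicity of transitivity under subsets. -/
lemma isTransOn_subset {A B : Finset (Fin n)} (hBA : B ⊆ A) (hA : IsTransOn T A) :
    IsTransOn T B := fun u hu v hv w hw h1 h2 => hA u (hBA hu) v (hBA hv) w (hBA hw) h1 h2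

/-- Any set of at most two vertices is transitive. -/
lemma isTransOn_of_card_le_two {A : Finset (Fin n)} (hA : A.card ≤ 2) : IsTransOn T A := by
  intro u hu v hv w hw h1 h2
  have huv : u ≠ v := by rintro rfl; rw [T.irrefl] at h1; exact absurd h1 (by simp)
  have hvw : v ≠ w := by rintro rfl; rw [T.irrefl] at h2; exact absurd h2 (by simp)
  have huw : u ≠ w := by
    rintro rfl
    have := T.asym h1
    rw [this] at h2; exact absurd h2 (by simp)
  exfalso
  have : ({u, v, w} : Finset (Fin n)) ⊆ A := by
    intro x hx; simp only [mem_insert, mem_singleton] at hx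
    rcases hx with rfl | rfl | rfl <;> assumption
  have h3 : ({u, v, w} : Finset (Fin n)).card = 3 := by
    rw [card_insert_of_notMem (by simp [huv, huw]), card_insert_of_notMem (by simp [hvw]),
      card_singleton]
  have := Finset.card_le_card this
  omega

lemma sCount_two (A : Finset (Fin n)) : T.sCount 2 A = A.card.choose 2 := by
  classical
  rw [sCount]
  rw [Finset.filter_true_of_mem, Finset.card_powersetCard]
  intro B hB
  rw [Finset.mem_powersetCard] at hB
  exact T.isTransOn_of_card_le_two hB.2.le

lemma sCount_zero (A : Finset (Fin n)) : T.sCount 0 A = 1 := by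
  classical
  rw [sCount]
  rw [Finset.filter_true_of_mem, Finset.card_powersetCard, Nat.choose_zero_right]
  intro B hB
  rw [Finset.mem_powersetCard, Finset.card_eq_zero] at hB
  exact T.isTransOn_of_card_le_two (by simp [hB.2])

end Tournament
namespace Tournament

variable {n : ℕ} (T : Tournament n)

open Finset

/-- The number of oriented pairs inside a set `A` is `|A| choose 2`. -/
lemma card_arcs (A : Finset (Fin n)) :
    ((A ×ˢ A).filter (fun p => T.rel p.1 p.2 = true)).card = A.card.choose 2 := by
  classical
  set X := (A ×ˢ A).filter (fun p => T.rel p.1 p.2 = true) with hX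
  set Y := (A ×ˢ A).filter (fun p => T.rel p.2 p.1 = true) with hY
  have hcardXY : X.card = Y.card := by
    apply Finset.card_bij (fun p _ => (p.2, p.1))
    · intro p hp
      simp only [hX, hY, Finset.mem_filter, Finset.mem_product] at hp ⊢
      exact ⟨⟨hp.1.2, hp.1.1⟩, hp.2⟩
    · intro p hp q hq h
      simp only [Prod.mk.injEq] at h
      exact Prod.ext h.2 h.1
    · intro p hp
      refine ⟨(p.2, p.1), ?_, rfl⟩
      simp only [hX, hY, Finset.mem_filter, Finset.mem_product] at hp ⊢
      exact ⟨⟨hp.1.2, hp.1.1⟩, hp.2⟩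
  have hdisj : Disjoint X Y := by
    rw [Finset.disjoint_left]
    intro p hp hq
    simp only [hX, hY, Finset.mem_filter] at hp hq
    have := T.asym hp.2
    rw [this] at hq
    simpa using hq.2
  have hunion : X ∪ Y = A.offDiag := by
    ext p
    simp only [hX, hY, Finset.mem_union, Finset.mem_filter, Finset.mem_offDiag,
      Finset.mem_product]
    constructor
    · rintro (⟨⟨h1, h2⟩, h⟩ | ⟨⟨h1, h2⟩, h⟩) <;> refine ⟨h1, h2, fun heq => ?_⟩
      · rw [heq, T.irrefl] at h; simp at h
      · rw [heq, T.irrefl] at h; simp at h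
    · rintro ⟨h1, h2, hne⟩
      by_cases h : T.rel p.1 p.2 = true
      · exact Or.inl ⟨⟨h1, h2⟩, h⟩
      · refine Or.inr ⟨⟨h1, h2⟩, ?_⟩
        exact T.rel_of_ne_of_not hne (by simpa using h)
  have hcard : X.card + Y.card = A.card * A.card - A.card := by
    rw [← Finset.card_union_of_disjoint hdisj, hunion, Finset.offDiag_card]
  rw [← hcardXY] at hcard
  have key : A.card * A.card - A.card = A.card * (A.card - 1) := by
    cases' A.card with c
    · simp
    · rw [Nat.succ_sub_one, Nat.mul_succ, Nat.add_sub_cancel]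
  rw [key] at hcard
  rw [Nat.choose_two_right]
  omega

/-- A nonempty transitive set has a source. -/
lemma exists_source {A : Finset (Fin n)} (hne : A.Nonempty) (hA : IsTransOn T A) :
    ∃ v ∈ A, ∀ w ∈ A, w ≠ v → T.rel v w = true := by
  classical
  obtain ⟨v, hv, hmax⟩ := Finset.exists_max_image A (fun v => (A.filter (fun w => T.rel v w = true)).card) hne
  refine ⟨v, hv, ?_⟩
  intro w hw hne'
  by_contra h
  have hwv : T.rel w v = true := T.rel_of_ne_of_not (Ne.symm hne') (by simpa using h)
  -- then N⁺(w) ∩ A ⊋ N⁺(v) ∩ A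
  have hsub : insert v (A.filter (fun x => T.rel v x = true)) ⊆ A.filter (fun x => T.rel w x = true) := by
    intro x hx
    rcases Finset.mem_insert.mp hx with rfl | hx
    · exact Finset.mem_filter.mpr ⟨hv, hwv⟩
    · rw [Finset.mem_filter] at hx ⊢
      exact ⟨hx.1, hA w hw v hv x hx.1 hwv hx.2⟩
  have hnotmem : v ∉ A.filter (fun x => T.rel v x = true) := by
    simp [T.irrefl v]
  have := Finset.card_le_card hsub
  rw [Finset.card_insert_of_notMem hnotmem] at this
  have := hmax w hw
  omega

lemma source_unique {A : Finset (Fin n)} {v v' : Fin n} (hv : v ∈ A) (hv' : v' ∈ A)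
    (h1 : ∀ w ∈ A, w ≠ v → T.rel v w = true) (h2 : ∀ w ∈ A, w ≠ v' → T.rel v' w = true) :
    v = v' := by
  by_contra hne
  have a1 := h1 v' hv' (Ne.symm hne)
  have a2 := h2 v hv hne
  have := T.asym a1
  rw [this] at a2
  simpa using a2

end Tournament
namespace Tournament

variable {n : ℕ} (T : Tournament n)

open Finset

/-- Source decomposition of transitive sets. -/
lemma sCount_succ (m : ℕ) (A : Finset (Fin n)) :
    T.sCount (m + 1) A = ∑ v ∈ A, T.sCount m (A ∩ outSet T v) := by
  classical
  set S := (Finset.powersetCard (m + 1) A).filter (IsTransOn T) with hS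
  have hmem : ∀ B ∈ S, B ⊆ A ∧ B.card = m + 1 ∧ IsTransOn T B := by
    intro B hB
    rw [hS, Finset.mem_filter, Finset.mem_powersetCard] at hB
    exact ⟨hB.1.1, hB.1.2, hB.2⟩
  set fib := fun v => S.filter (fun B => v ∈ B ∧ ∀ w ∈ B, w ≠ v → T.rel v w = true) with hfib
  have hdecomp : S = A.biUnion fib := by
    apply Finset.Subset.antisymm
    · intro B hB
      obtain ⟨hBA, hcard, htrans⟩ := hmem B hB
      have hne : B.Nonempty := Finset.card_pos.mp (by omega)
      obtain ⟨v, hv, hsrc⟩ := T.exists_source hne htrans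
      exact Finset.mem_biUnion.mpr ⟨v, hBA hv, Finset.mem_filter.mpr ⟨hB, hv, hsrc⟩⟩
    · exact Finset.biUnion_subset.mpr (fun v _ => Finset.filter_subset _ _)
  have hdisj : ∀ v ∈ A, ∀ v' ∈ A, v ≠ v' → Disjoint (fib v) (fib v') := by
    intro v _ v' _ hne
    rw [Finset.disjoint_left]
    intro B hB hB'
    rw [hfib, Finset.mem_filter] at hB hB'
    exact hne (T.source_unique hB.2.1 hB'.2.1 hB.2.2 hB'.2.2)
  rw [sCount, ← hS, hdecomp, Finset.card_biUnion hdisj]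
  apply Finset.sum_congr rfl
  intro v hvA
  rw [sCount]
  apply Finset.card_nbij' (fun B => B.erase v) (fun C => insert v C)
  · -- maps into target
    intro B hB
    simp only [Finset.mem_coe, hfib, Finset.mem_filter] at hB
    obtain ⟨hBS, hvB, hsrc⟩ := hB
    obtain ⟨hBA, hcard, htrans⟩ := hmem B hBS
    rw [Finset.mem_coe, Finset.mem_filter, Finset.mem_powersetCard]
    refine ⟨⟨?_, ?_⟩, ?_⟩
    · intro w hw
      rw [Finset.mem_erase] at hw
      rw [Finset.mem_inter]
      refine ⟨hBA hw.2, ?_⟩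
      rw [outSet, Finset.mem_filter]
      exact ⟨Finset.mem_univ _, hsrc w hw.2 hw.1⟩
    · rw [Finset.card_erase_of_mem hvB, hcard]; rfl
    · exact T.isTransOn_subset (Finset.erase_subset _ _) htrans
  · -- inverse maps into source
    intro C hC
    rw [Finset.mem_coe, Finset.mem_filter, Finset.mem_powersetCard] at hC
    obtain ⟨⟨hCsub, hCcard⟩, hCtrans⟩ := hC
    have hCA : C ⊆ A := fun x hx => (Finset.mem_inter.mp (hCsub hx)).1
    have hCout : ∀ x ∈ C, T.rel v x = true := by
      intro x hx
      have := (Finset.mem_inter.mp (hCsub hx)).2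
      rw [outSet, Finset.mem_filter] at this
      exact this.2
    have hvC : v ∉ C := by
      intro hv
      have := hCout v hv
      rw [T.irrefl] at this; simp at this
    have htrans' : IsTransOn T (insert v C) := by
      intro u hu w hw x hx h1 h2
      rw [Finset.mem_insert] at hu hw hx
      -- w ≠ v when rel * w true from v-dominance? handle cases
      rcases hx with rfl | hx
      · -- x = v : rel w v = true, but w ∈ insert
        rcases hw with rfl | hw
        · rw [T.irrefl] at h2; simp at h2
        · have := T.asym (hCout w hw)
          rw [this] at h2; simp at h2
      · rcases hu with rfl | hu
        · exact hCout x hx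
        · rcases hw with rfl | hw
          · have := T.asym (hCout u hu)
            rw [this] at h1; simp at h1
          · exact hCtrans u hu w hw x hx h1 h2
    simp only [Finset.mem_coe, hfib, Finset.mem_filter]
    refine ⟨?_, Finset.mem_insert_self _ _, ?_⟩
    · rw [hS, Finset.mem_filter, Finset.mem_powersetCard]
      refine ⟨⟨?_, ?_⟩, htrans'⟩
      · exact Finset.insert_subset hvA hCA
      · rw [Finset.card_insert_of_notMem hvC, hCcard]
    · intro w hw hne
      rcases Finset.mem_insert.mp hw with rfl | hw
      · exact absurd rfl hne
      · exact hCout w hw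
  · -- left inverse
    intro B hB
    simp only [Finset.mem_coe, hfib, Finset.mem_filter] at hB
    exact Finset.insert_erase hB.2.1
  · -- right inverse
    intro C hC
    rw [Finset.mem_coe, Finset.mem_filter, Finset.mem_powersetCard] at hC
    have hvC : v ∉ C := by
      intro hv
      have := (Finset.mem_inter.mp (hC.1.1 hv)).2
      rw [outSet, Finset.mem_filter, T.irrefl] at this
      simpa using this.2
    exact Finset.erase_insert hvC

end Tournament
namespace Tournament

variable {n : ℕ} (T : Tournament n)

open Finset

/-- Transitive-subset counts of an induced subtournament. -/
lemma trCount_induce (m : ℕ) (A : Finset (Fin n)) :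
    trCount m (induce T A) = T.sCount m A := by
  classical
  rw [trCount, sCount]
  set e := A.orderIsoOfFin rfl with he
  set f : Fin A.card → Fin n := fun i => (e i : Fin n) with hf
  have hfinj : Function.Injective f := by
    intro i j h
    exact e.injective (Subtype.ext h)
  have hfmem : ∀ i, f i ∈ A := fun i => (e i).2
  apply Finset.card_nbij' (fun B => B.image f)
    (fun C => Finset.univ.filter (fun i => f i ∈ C))
  · intro B hB
    rw [Finset.mem_coe, Finset.mem_filter, Finset.mem_powersetCard] at hB ⊢
    obtain ⟨⟨_, hcard⟩, htrans⟩ := hB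
    refine ⟨⟨?_, ?_⟩, ?_⟩
    · intro x hx
      obtain ⟨i, _, rfl⟩ := Finset.mem_image.mp hx
      exact hfmem i
    · rw [Finset.card_image_of_injective _ hfinj, hcard]
    · intro u hu v hv w hw h1 h2
      obtain ⟨i, hi, rfl⟩ := Finset.mem_image.mp hu
      obtain ⟨j, hj, rfl⟩ := Finset.mem_image.mp hv
      obtain ⟨l, hl, rfl⟩ := Finset.mem_image.mp hw
      have e1 : T.rel (f i) (f j) = (induce T A).rel i j := rfl
      have e2 : T.rel (f j) (f l) = (induce T A).rel j l := rfl
      have e3 : T.rel (f i) (f l) = (induce T A).rel i l := rfl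
      rw [e1] at h1; rw [e2] at h2; rw [e3]
      exact htrans i hi j hj l hl h1 h2
  · intro C hC
    rw [Finset.mem_coe, Finset.mem_filter, Finset.mem_powersetCard] at hC ⊢
    obtain ⟨⟨hsub, hcard⟩, htrans⟩ := hC
    refine ⟨⟨Finset.filter_subset _ _ |>.trans (Finset.subset_univ _ |>.trans (le_refl _)), ?_⟩, ?_⟩
    · -- cardinality: the filter is the преimage of C under the bijection e
      have : (Finset.univ.filter (fun i => f i ∈ C)).image f = C := by
        apply Finset.Subset.antisymm
        · intro x hx
          obtain ⟨i, hi, rfl⟩ := Finset.mem_image.mp hx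
          exact (Finset.mem_filter.mp hi).2
        · intro x hx
          have hxA : x ∈ A := hsub hx
          refine Finset.mem_image.mpr ⟨e.symm ⟨x, hxA⟩, ?_, ?_⟩
          · rw [Finset.mem_filter]
            refine ⟨Finset.mem_univ _, ?_⟩
            rw [hf]
            simp only [OrderIso.apply_symm_apply]
            exact hx
          · rw [hf]; simp only [OrderIso.apply_symm_apply]
      rw [← this, Finset.card_image_of_injective _ hfinj] at hcard
      exact hcard
    · intro i hi j hj l hl h1 h2
      rw [Finset.mem_filter] at hi hj hl
      exact htrans (f i) hi.2 (f j) hj.2 (f l) hl.2 h1 h2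
  · intro B hB
    apply Finset.Subset.antisymm
    · intro i hi
      rw [Finset.mem_filter] at hi
      obtain ⟨j, hj, hji⟩ := Finset.mem_image.mp hi.2
      rwa [hfinj hji] at hj
    · intro i hi
      rw [Finset.mem_filter]
      exact ⟨Finset.mem_univ _, Finset.mem_image_of_mem f hi⟩
  · intro C hC
    rw [Finset.mem_coe, Finset.mem_filter, Finset.mem_powersetCard] at hC
    apply Finset.Subset.antisymm
    · intro x hx
      obtain ⟨i, hi, rfl⟩ := Finset.mem_image.mp hx
      exact (Finset.mem_filter.mp hi).2
    · intro x hx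
      have hxA : x ∈ A := hC.1.1 hx
      refine Finset.mem_image.mpr ⟨e.symm ⟨x, hxA⟩, ?_, ?_⟩
      · rw [Finset.mem_filter]
        refine ⟨Finset.mem_univ _, ?_⟩
        rw [hf]; simp only [OrderIso.apply_symm_apply]; exact hx
      · rw [hf]; simp only [OrderIso.apply_symm_apply]

end Tournament
namespace Tournament

variable {n : ℕ} (T : Tournament n)

open Finset

lemma Tr_rel {k : ℕ} (i j : Fin k) : (Tr k).rel i j = decide (i < j) := rfl

lemma isoOn_of_isTransOn : ∀ (m : ℕ) (A : Finset (Fin n)), A.card = m → IsTransOn T A →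
    IsoOn (Tr m) T A := by
  intro m
  induction m with
  | zero =>
    intro A hcard _
    refine ⟨Fin.elim0, fun x => x.elim0, ?_, fun i => i.elim0⟩
    rw [Finset.card_eq_zero] at hcard
    subst hcard
    simp
  | succ m ih =>
    intro A hcard htrans
    have hne : A.Nonempty := Finset.card_pos.mp (by omega)
    obtain ⟨v, hv, hsrc⟩ := T.exists_source hne htrans
    have herase_card : (A.erase v).card = m := by
      rw [Finset.card_erase_of_mem hv, hcard]; rfl
    obtain ⟨g, hginj, hgim, hgrel⟩ :=
      ih (A.erase v) herase_card (T.isTransOn_subset (Finset.erase_subset _ _) htrans)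
    have hgmem : ∀ i, g i ∈ A.erase v := by
      intro i; rw [← hgim]; exact Finset.mem_image_of_mem g (Finset.mem_univ i)
    refine ⟨Fin.cases v g, ?_, ?_, ?_⟩
    · intro i j hij
      match i, j with
      | 0, 0 => rfl
      | 0, ⟨j + 1, hj⟩ =>
        exfalso
        have : (⟨j + 1, hj⟩ : Fin (m+1)) = Fin.succ ⟨j, by omega⟩ := rfl
        rw [this] at hij
        simp only [Fin.cases_zero, Fin.cases_succ] at hij
        have := hgmem ⟨j, by omega⟩
        rw [← hij] at this
        exact (Finset.mem_erase.mp this).1 rfl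
      | ⟨i + 1, hi⟩, 0 =>
        exfalso
        have : (⟨i + 1, hi⟩ : Fin (m+1)) = Fin.succ ⟨i, by omega⟩ := rfl
        rw [this] at hij
        simp only [Fin.cases_zero, Fin.cases_succ] at hij
        have := hgmem ⟨i, by omega⟩
        rw [hij] at this
        exact (Finset.mem_erase.mp this).1 rfl
      | ⟨i + 1, hi⟩, ⟨j + 1, hj⟩ =>
        have hi' : (⟨i + 1, hi⟩ : Fin (m+1)) = Fin.succ ⟨i, by omega⟩ := rfl
        have hj' : (⟨j + 1, hj⟩ : Fin (m+1)) = Fin.succ ⟨j, by omega⟩ := rfl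
        rw [hi', hj'] at hij ⊢
        simp only [Fin.cases_succ] at hij
        rw [hginj hij]
    · have key : Finset.univ.image (fun i => (Fin.cases v g : Fin (m+1) → Fin n) i)
          = insert v (A.erase v) := by
        ext x
        simp only [Finset.mem_image, Finset.mem_insert, Finset.mem_univ, true_and]
        constructor
        · rintro ⟨i, rfl⟩
          rcases Fin.eq_zero_or_eq_succ i with rfl | ⟨j, rfl⟩
          · left; rfl
          · right
            rw [← hgim]
            simp only [Fin.cases_succ, Finset.mem_image, Finset.mem_univ, true_and]
            exact ⟨j, rfl⟩
        · rintro (rfl | hx)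
          · exact ⟨0, rfl⟩
          · rw [← hgim] at hx
            obtain ⟨j, _, rfl⟩ := Finset.mem_image.mp hx
            exact ⟨j.succ, by simp⟩
      rw [key]
      exact Finset.insert_erase hv
    · intro i j
      match i, j with
      | 0, 0 =>
        rw [Tr_rel, T.irrefl]
        simp
      | 0, ⟨j + 1, hj⟩ =>
        have hj' : (⟨j + 1, hj⟩ : Fin (m+1)) = Fin.succ ⟨j, by omega⟩ := rfl
        rw [hj']
        simp only [Fin.cases_zero, Fin.cases_succ]
        have hmem := Finset.mem_erase.mp (hgmem ⟨j, by omega⟩)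
        have h1 : T.rel v (g ⟨j, by omega⟩) = true := hsrc _ ((Finset.erase_subset _ _) (hgmem _)) hmem.1
        rw [h1, Tr_rel, decide_eq_true_eq]
        exact Fin.succ_pos _
      | ⟨i + 1, hi⟩, 0 =>
        have hi' : (⟨i + 1, hi⟩ : Fin (m+1)) = Fin.succ ⟨i, by omega⟩ := rfl
        rw [hi']
        simp only [Fin.cases_zero, Fin.cases_succ]
        have hmem := Finset.mem_erase.mp (hgmem ⟨i, by omega⟩)
        have h1 : T.rel v (g ⟨i, by omega⟩) = true := hsrc _ ((Finset.erase_subset _ _) (hgmem _)) hmem.1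
        rw [T.asym h1, Tr_rel, decide_eq_false_iff_not]
        exact Fin.not_lt_zero _
      | ⟨i + 1, hi⟩, ⟨j + 1, hj⟩ =>
        have hi' : (⟨i + 1, hi⟩ : Fin (m+1)) = Fin.succ ⟨i, by omega⟩ := rfl
        have hj' : (⟨j + 1, hj⟩ : Fin (m+1)) = Fin.succ ⟨j, by omega⟩ := rfl
        rw [hi', hj']
        simp only [Fin.cases_succ]
        rw [← hgrel, Tr_rel, Tr_rel]
        exact decide_eq_decide.mpr (by simp [Fin.lt_def])

lemma isTransOn_of_isoOn {m : ℕ} {A : Finset (Fin n)} (h : IsoOn (Tr m) T A) :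
    IsTransOn T A := by
  obtain ⟨f, hinj, him, hrel⟩ := h
  intro u hu v hv w hw h1 h2
  rw [← him] at hu hv hw
  obtain ⟨i, _, rfl⟩ := Finset.mem_image.mp hu
  obtain ⟨j, _, rfl⟩ := Finset.mem_image.mp hv
  obtain ⟨l, _, rfl⟩ := Finset.mem_image.mp hw
  rw [← hrel] at h1 h2 ⊢
  simp only [Tr, decide_eq_true_eq] at h1 h2 ⊢
  exact h1.trans h2

lemma copyCount_Tr (m : ℕ) : copyCount (Tr m) T = trCount m T := by
  classical
  rw [copyCount, trCount]
  congr 1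
  apply Finset.filter_congr
  intro A hA
  rw [Finset.mem_powersetCard] at hA
  constructor
  · exact fun h => T.isTransOn_of_isoOn h
  · exact fun h => T.isoOn_of_isTransOn m A hA.2 h

end Tournament
namespace Tournament

variable {n : ℕ} (T : Tournament n)

open Finset

lemma inter_outSet (A : Finset (Fin n)) (v : Fin n) :
    A ∩ outSet T v = A.filter (fun w => T.rel v w = true) := by
  ext x
  simp [outSet, Finset.mem_inter, Finset.mem_filter, and_comm]

/-- Sum of local out-degrees within a set. -/
lemma sum_inter_outSet_card (A : Finset (Fin n)) :
    ∑ v ∈ A, (A ∩ outSet T v).card = A.card.choose 2 := by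
  classical
  rw [← T.card_arcs A]
  rw [Finset.card_eq_sum_card_fiberwise
    (f := Prod.fst) (t := A) (fun p hp => (Finset.mem_product.mp (Finset.mem_filter.mp hp).1).1)]
  apply Finset.sum_congr rfl
  intro v hv
  rw [inter_outSet]
  apply Finset.card_nbij' (fun w => (v, w)) (fun p => p.2)
  · intro w hw
    rw [Finset.mem_coe, Finset.mem_filter] at hw ⊢
    rw [Finset.mem_filter, Finset.mem_product]
    exact ⟨⟨⟨hv, hw.1⟩, hw.2⟩, rfl⟩
  · intro p hp
    rw [Finset.mem_coe, Finset.mem_filter] at hp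
    obtain ⟨hp1, hp2⟩ := hp
    rw [Finset.mem_filter] at hp1
    rw [Finset.mem_coe, Finset.mem_filter]
    subst hp2
    exact ⟨(Finset.mem_product.mp hp1.1).2, hp1.2⟩
  · intro w _; rfl
  · intro p hp
    rw [Finset.mem_coe, Finset.mem_filter] at hp
    exact Prod.ext hp.2.symm rfl

lemma outSet_card (v : Fin n) : (outSet T v).card = outDeg T v := rfl

lemma sum_outDeg : ∑ v, outDeg T v = n.choose 2 := by
  have := T.sum_inter_outSet_card Finset.univ
  simp only [Finset.univ_inter, Finset.card_univ, Fintype.card_fin] at this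
  rw [← this]
  rfl

/-- `tr₃` as a sum over vertices. -/
lemma trCount_three : trCount 3 T = ∑ v, (outDeg T v).choose 2 := by
  rw [trCount_eq_sCount]
  rw [show (3:ℕ) = 2 + 1 from rfl, T.sCount_succ 2 Finset.univ]
  apply Finset.sum_congr rfl
  intro v _
  rw [Finset.univ_inter, T.sCount_two, outSet_card]

/-- The arc set, as a sigma type. -/
noncomputable def arcs : Finset ((_ : Fin n) × Fin n) :=
  Finset.univ.sigma (fun u => outSet T u)

lemma arcs_card : (T.arcs).card = n.choose 2 := by
  rw [arcs, Finset.card_sigma, ← T.sum_outDeg]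
  rfl

lemma arcs_rel {p : (_ : Fin n) × Fin n} (hp : p ∈ T.arcs) : T.rel p.1 p.2 = true := by
  rw [arcs, Finset.mem_sigma] at hp
  have := hp.2
  rw [outSet, Finset.mem_filter] at this
  exact this.2

lemma sum_arcs_inter : ∑ p ∈ T.arcs, ((outSet T p.1 ∩ outSet T p.2).card : ℕ) = trCount 3 T := by
  rw [arcs, Finset.sum_sigma, T.trCount_three]
  apply Finset.sum_congr rfl
  intro u _
  show ∑ s ∈ outSet T u, (outSet T u ∩ outSet T s).card = (outDeg T u).choose 2
  rw [← T.outSet_card u, ← T.sum_inter_outSet_card (outSet T u)]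

lemma trCount_decomp (m : ℕ) :
    trCount (m + 2) T = ∑ p ∈ T.arcs, T.sCount m (outSet T p.1 ∩ outSet T p.2) := by
  rw [trCount_eq_sCount, show m + 2 = (m + 1) + 1 from rfl, T.sCount_succ (m+1) Finset.univ]
  rw [arcs, Finset.sum_sigma]
  apply Finset.sum_congr rfl
  intro u _
  show T.sCount (m+1) (Finset.univ ∩ outSet T u)
      = ∑ s ∈ outSet T u, T.sCount m (outSet T u ∩ outSet T s)
  rw [Finset.univ_inter, T.sCount_succ m (outSet T u)]

end Tournament
open Finset in
/-- Jensen for natural powers with a clamped mean. -/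
lemma conv_lemma {ι : Type*} (s : Finset ι) (f : ι → ℝ) (hf : ∀ i ∈ s, 0 ≤ f i) (t : ℝ)
    (ht : (s.card : ℝ) * t ≤ ∑ i ∈ s, f i) (m : ℕ) :
    (s.card : ℝ) * (max t 0) ^ m ≤ ∑ i ∈ s, f i ^ m := by
  cases m with
  | zero => simp
  | succ m =>
    rcases s.eq_empty_or_nonempty with rfl | hs
    · simp
    rcases le_or_gt t 0 with h | h
    · rw [max_eq_right h, zero_pow (Nat.succ_ne_zero m), mul_zero]
      exact Finset.sum_nonneg (fun i hi => pow_nonneg (hf i hi) _)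
    · rw [max_eq_left h.le]
      have hcard : (0:ℝ) < s.card := by
        exact_mod_cast Finset.card_pos.mpr hs
      refine le_trans ?_ (pow_sum_div_card_le_sum_pow hf m)
      rw [le_div_iff₀ (by positivity)]
      have h1 : (s.card : ℝ) * t ^ (m+1) * (s.card : ℝ)^m = ((s.card : ℝ) * t)^(m+1) := by ring
      rw [h1]
      exact pow_le_pow_left₀ (by positivity) ht _

namespace Tournament

open Finset

/-- Universal lower bound on the number of transitive subsets. -/
lemma universal_lb : ∀ (m : ℕ) {n : ℕ} (T : Tournament n),
    (max ((n:ℝ) - 3 ^ m) 0) ^ m ≤ 2 ^ (m.choose 2) * (trCount m T : ℝ) := by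
  intro m
  induction m with
  | zero =>
    intro n T
    have h0 : trCount 0 T = 1 := by rw [trCount_eq_sCount, T.sCount_zero]
    simp [h0]
  | succ m ih =>
    intro n T
    have h1 : trCount (m+1) T = ∑ v, trCount m (induce T (outSet T v)) := by
      rw [trCount_eq_sCount, T.sCount_succ m Finset.univ]
      exact Finset.sum_congr rfl
        (fun v _ => by rw [Finset.univ_inter, T.trCount_induce m (outSet T v)])
    have hsum : ∑ v, (max (((outSet T v).card : ℝ) - 3^m) 0)^m
        ≤ 2^(m.choose 2) * (trCount (m+1) T : ℝ) := by
      rw [h1]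
      push_cast
      rw [Finset.mul_sum]
      exact Finset.sum_le_sum (fun v _ => ih (induce T (outSet T v)))
    have hdeg : ∑ v : Fin n, ((outSet T v).card : ℝ) = (n.choose 2 : ℝ) := by
      exact_mod_cast congrArg (Nat.cast (R := ℝ)) T.sum_outDeg
    have hcardu : ((Finset.univ : Finset (Fin n)).card : ℝ) = n := by simp
    have hconv : (n : ℝ) * (max (((n:ℝ)-1)/2 - 3^m) 0)^m
        ≤ ∑ v, (max (((outSet T v).card : ℝ) - 3^m) 0)^m := by
      rw [← hcardu]
      apply conv_lemma _ _ (fun i _ => le_max_right _ _)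
      rw [hcardu]
      have e1 : (n:ℝ) * (((n:ℝ)-1)/2 - 3^m) = (n.choose 2 : ℝ) - n * 3^m := by
        rw [Nat.cast_choose_two]; ring
      have e2 : ∑ v, (max (((outSet T v).card : ℝ) - 3^m) 0)
          ≥ ∑ v : Fin n, (((outSet T v).card : ℝ) - 3^m) :=
        Finset.sum_le_sum (fun i _ => le_max_left _ _)
      have e3 : ∑ v : Fin n, (((outSet T v).card : ℝ) - 3^m)
          = (n.choose 2 : ℝ) - n * 3^m := by
        rw [Finset.sum_sub_distrib, hdeg, Finset.sum_const, nsmul_eq_mul, hcardu]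
      rw [e1, ← e3]
      exact e2
    -- assemble
    set a : ℝ := max ((n:ℝ) - 3^(m+1)) 0 with ha
    set b : ℝ := max (((n:ℝ)-1)/2 - 3^m) 0 with hb
    have ha0 : 0 ≤ a := le_max_right _ _
    have hb0 : 0 ≤ b := le_max_right _ _
    have h3m : (1:ℝ) ≤ 3^m := one_le_pow₀ (by norm_num)
    have h2b : (2:ℝ) * b = max ((n:ℝ) - 1 - 2*3^m) 0 := by
      rw [hb, mul_max_of_nonneg _ _ (by norm_num : (0:ℝ) ≤ 2), mul_zero]
      ring_nf
    have hab : a ≤ 2 * b := by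
      rw [h2b, ha]
      apply max_le_max _ (le_refl 0)
      have : (3:ℝ)^(m+1) = 3 * 3^m := by ring
      rw [this]
      linarith
    have han : a ≤ n := by
      rw [ha]
      apply max_le _ (Nat.cast_nonneg n)
      have : (0:ℝ) ≤ 3^(m+1) := by positivity
      linarith
    have hc2 : (m+1).choose 2 = m + m.choose 2 := by
      rw [Nat.choose_succ_succ, Nat.choose_one_right]
    calc a ^ (m+1) = a^m * a := pow_succ a m
      _ ≤ (2*b)^m * n := by
          apply mul_le_mul (pow_le_pow_left₀ ha0 hab m) han ha0 (by positivity)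
      _ = 2^m * ((n:ℝ) * b^m) := by ring
      _ ≤ 2^m * (∑ v, (max (((outSet T v).card : ℝ) - 3^m) 0)^m) := by
          apply mul_le_mul_of_nonneg_left hconv (by positivity)
      _ ≤ 2^m * (2^(m.choose 2) * (trCount (m+1) T : ℝ)) := by
          apply mul_le_mul_of_nonneg_left hsum (by positivity)
      _ = 2^((m+1).choose 2) * (trCount (m+1) T : ℝ) := by
          rw [hc2, pow_add]; ring

end Tournament
namespace Tournament

open Finset

variable {n : ℕ} (T : Tournament n)

/-- The key convexity bound: transitive `(m+2)`-sets vs transitive triples. -/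
lemma top_bound (m : ℕ) :
    (n.choose 2 : ℝ) * (max ((trCount 3 T : ℝ)/(n.choose 2 : ℝ) - 3^m) 0)^m
      ≤ 2^(m.choose 2) * (trCount (m+2) T : ℝ) := by
  classical
  rcases Nat.eq_zero_or_pos (n.choose 2) with hc | hc
  · rw [hc]
    simp only [Nat.cast_zero, zero_mul]
    positivity
  have hc2 : (0:ℝ) < (n.choose 2 : ℝ) := by exact_mod_cast hc
  have hper : ∀ p ∈ T.arcs, (max (((outSet T p.1 ∩ outSet T p.2).card : ℝ) - 3^m) 0)^m
      ≤ 2^(m.choose 2) * (T.sCount m (outSet T p.1 ∩ outSet T p.2) : ℝ) := by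
    intro p _
    have := universal_lb m (induce T (outSet T p.1 ∩ outSet T p.2))
    rwa [trCount_induce] at this
  have hmean : (T.arcs.card : ℝ) * ((trCount 3 T : ℝ)/(n.choose 2:ℝ) - 3^m)
      ≤ ∑ p ∈ T.arcs, (max (((outSet T p.1 ∩ outSet T p.2).card : ℝ) - 3^m) 0) := by
    have harc : (T.arcs.card : ℝ) = (n.choose 2 : ℝ) := by
      exact_mod_cast congrArg (Nat.cast (R := ℝ)) T.arcs_card
    have e1 : (T.arcs.card:ℝ) * ((trCount 3 T : ℝ)/(n.choose 2:ℝ) - 3^m)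
        = (trCount 3 T : ℝ) - (T.arcs.card:ℝ)*3^m := by
      rw [harc]
      field_simp
    have e2 : ∑ p ∈ T.arcs, ((((outSet T p.1 ∩ outSet T p.2).card : ℝ)) - 3^m)
        = (trCount 3 T:ℝ) - (T.arcs.card:ℝ)*3^m := by
      rw [Finset.sum_sub_distrib, Finset.sum_const, nsmul_eq_mul]
      congr 1
      exact_mod_cast congrArg (Nat.cast (R := ℝ)) T.sum_arcs_inter
    rw [e1, ← e2]
    exact Finset.sum_le_sum (fun p _ => le_max_left _ _)
  have hconv := conv_lemma T.arcs
    (fun p => max (((outSet T p.1 ∩ outSet T p.2).card : ℝ) - 3^m) 0)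
    (fun p _ => le_max_right _ _)
    ((trCount 3 T : ℝ)/(n.choose 2:ℝ) - 3^m) hmean m
  have harc : (T.arcs.card : ℝ) = (n.choose 2 : ℝ) := by
    exact_mod_cast congrArg (Nat.cast (R := ℝ)) T.arcs_card
  rw [harc] at hconv
  refine le_trans hconv ?_
  rw [T.trCount_decomp m]
  push_cast
  rw [Finset.mul_sum]
  exact Finset.sum_le_sum hper

end Tournament
section Limits

open Filter Finset

lemma cast_choose_prod {n k : ℕ} (h : k ≤ n) :
    (n.choose k : ℝ) * (k.factorial : ℝ) = ∏ i ∈ Finset.range k, ((n:ℝ) - i) := by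
  have h1 : n.descFactorial k = k.factorial * n.choose k :=
    Nat.descFactorial_eq_factorial_mul_choose n k
  have h2 : n.descFactorial k = ∏ i ∈ Finset.range k, (n - i) :=
    Nat.descFactorial_eq_prod_range n k
  have h3 : ((n.descFactorial k : ℕ) : ℝ) = ∏ i ∈ Finset.range k, ((n:ℝ) - i) := by
    rw [h2, Nat.cast_prod]
    apply Finset.prod_congr rfl
    intro i hi
    rw [Finset.mem_range] at hi
    rw [Nat.cast_sub (le_trans (le_of_lt hi) h)]
  rw [← h3, h1]
  push_cast
  ring

lemma tendsto_ratio (c : ℝ) :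
    Tendsto (fun n : ℕ => ((n:ℝ) - c)/(n:ℝ)) atTop (nhds 1) := by
  have h : Tendsto (fun n : ℕ => 1 - c * (1/(n:ℝ))) atTop (nhds (1 - c * 0)) :=
    tendsto_const_nhds.sub (tendsto_const_nhds.mul tendsto_one_div_atTop_nhds_zero_nat)
  rw [mul_zero, sub_zero] at h
  apply h.congr'
  filter_upwards [eventually_ge_atTop 1] with n hn
  have hn0 : (n:ℝ) ≠ 0 := by
    have : (0:ℝ) < n := by exact_mod_cast hn
    exact ne_of_gt this
  field_simp

lemma tendsto_prod_ratio (k : ℕ) :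
    Tendsto (fun n : ℕ => ∏ i ∈ Finset.range k, (((n:ℝ) - i)/(n:ℝ))) atTop (nhds 1) := by
  have h := tendsto_finset_prod (f := fun (i : ℕ) (n : ℕ) => ((n:ℝ) - i)/(n:ℝ))
    (a := fun _ => (1:ℝ)) (Finset.range k) (fun i _ => tendsto_ratio (i:ℝ))
  simpa using h

lemma prod_ratio_eq {k n : ℕ} (h : 1 ≤ n) :
    ∏ i ∈ Finset.range k, (((n:ℝ) - i)/(n:ℝ))
      = (∏ i ∈ Finset.range k, ((n:ℝ) - i)) / (n:ℝ)^k := by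
  rw [Finset.prod_div_distrib, Finset.prod_const, Finset.card_range]

lemma prod_ratio_pos {k n : ℕ} (h : k ≤ n) :
    0 < ∏ i ∈ Finset.range k, ((n:ℝ) - i) := by
  apply Finset.prod_pos
  intro i hi
  rw [Finset.mem_range] at hi
  have : (i:ℝ) < n := by
    exact_mod_cast lt_of_lt_of_le hi h
  linarith

/-- Limit of the master lower-bound expression. -/
lemma tendsto_main (M : ℕ) (c y : ℝ) (hy : 0 ≤ y) :
    Tendsto (fun n : ℕ => (n.choose 2 : ℝ) * (max (y*((n:ℝ)-2)/3 - c) 0)^M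
      / (2^(M.choose 2) * ((n.choose (M+2)) : ℝ))) atTop
      (nhds ((1/2) * (y/3)^M * (((M+2).factorial : ℝ) / 2^(M.choose 2)))) := by
  have hA : Tendsto (fun n : ℕ => (n.choose 2 : ℝ)/(n:ℝ)^2) atTop (nhds (1/2)) := by
    have h : Tendsto (fun n : ℕ => (((n:ℝ) - 1)/(n:ℝ)) * (1/2)) atTop (nhds (1 * (1/2))) :=
      (tendsto_ratio 1).mul tendsto_const_nhds
    rw [one_mul] at h
    apply h.congr'
    filter_upwards [eventually_ge_atTop 1] with n hn
    have hn0 : (n:ℝ) ≠ 0 := by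
      have : (0:ℝ) < n := by exact_mod_cast hn
      exact ne_of_gt this
    rw [Nat.cast_choose_two]
    field_simp
  have hB : Tendsto (fun n : ℕ => max ((y*((n:ℝ)-2)/3 - c)/(n:ℝ)) 0) atTop
      (nhds (y/3)) := by
    have h1 : Tendsto (fun n : ℕ => (y/3) * (((n:ℝ)-2)/(n:ℝ)) - c * (1/(n:ℝ))) atTop
        (nhds ((y/3) * 1 - c * 0)) :=
      (tendsto_const_nhds.mul (tendsto_ratio 2)).sub
        (tendsto_const_nhds.mul tendsto_one_div_atTop_nhds_zero_nat)
    rw [mul_one, mul_zero, sub_zero] at h1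
    have h2 : Tendsto (fun n : ℕ => max ((y/3) * (((n:ℝ)-2)/(n:ℝ)) - c * (1/(n:ℝ))) 0) atTop
        (nhds (max (y/3) 0)) := h1.max tendsto_const_nhds
    rw [max_eq_left (by positivity)] at h2
    apply h2.congr'
    filter_upwards [eventually_ge_atTop 1] with n hn
    have hn0 : (n:ℝ) ≠ 0 := by
      have : (0:ℝ) < n := by exact_mod_cast hn
      exact ne_of_gt this
    congr 1
    field_simp
  have hC : Tendsto (fun n : ℕ => (((M+2).factorial : ℝ)
      / (2^(M.choose 2) * ∏ i ∈ Finset.range (M+2), (((n:ℝ) - i)/(n:ℝ))))) atTop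
      (nhds (((M+2).factorial : ℝ) / (2^(M.choose 2) * 1))) := by
    apply Tendsto.div tendsto_const_nhds
      (tendsto_const_nhds.mul (tendsto_prod_ratio (M+2)))
    positivity
  have hG : Tendsto (fun n : ℕ => ((n.choose 2 : ℝ)/(n:ℝ)^2)
      * (max ((y*((n:ℝ)-2)/3 - c)/(n:ℝ)) 0)^M
      * (((M+2).factorial : ℝ)
        / (2^(M.choose 2) * ∏ i ∈ Finset.range (M+2), (((n:ℝ) - i)/(n:ℝ))))) atTop
      (nhds ((1/2) * (y/3)^M * (((M+2).factorial : ℝ) / (2^(M.choose 2) * 1)))) :=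
    (hA.mul (hB.pow M)).mul hC
  rw [mul_one] at hG
  apply hG.congr'
  filter_upwards [eventually_ge_atTop (M+2)] with n hn
  have hn1 : 1 ≤ n := le_trans (by omega) hn
  have hn0 : (0:ℝ) < (n:ℝ) := by exact_mod_cast hn1
  have hP : 0 < ∏ i ∈ Finset.range (M+2), ((n:ℝ) - i) := prod_ratio_pos hn
  have hprod : (n.choose (M+2) : ℝ) * ((M+2).factorial : ℝ)
      = ∏ i ∈ Finset.range (M+2), ((n:ℝ) - i) := cast_choose_prod hn
  have hmax : max (y*((n:ℝ)-2)/3 - c) 0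
      = (n:ℝ) * max ((y*((n:ℝ)-2)/3 - c)/(n:ℝ)) 0 := by
    rw [mul_max_of_nonneg _ _ hn0.le, mul_zero, mul_div_cancel₀ _ (ne_of_gt hn0)]
  have hfac : (0:ℝ) < ((M+2).factorial : ℝ) := by
    exact_mod_cast (M+2).factorial_pos
  have hch : (n.choose (M+2) : ℝ) = (∏ i ∈ Finset.range (M+2), ((n:ℝ) - i))
      / ((M+2).factorial : ℝ) := by
    rw [eq_div_iff (ne_of_gt hfac)]
    exact hprod
  rw [prod_ratio_eq hn1, hmax, mul_pow, hch]
  rw [eq_comm]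
  field_simp
  ring

/-- Limit of the universal lower-bound expression for triples. -/
lemma tendsto_lo :
    Tendsto (fun n : ℕ => (max ((n:ℝ) - 27) 0)^3 / (8 * ((n.choose 3) : ℝ))) atTop
      (nhds (3/4)) := by
  have hB : Tendsto (fun n : ℕ => max (((n:ℝ) - 27)/(n:ℝ)) 0) atTop (nhds 1) := by
    have h2 : Tendsto (fun n : ℕ => max (((n:ℝ)-27)/(n:ℝ)) 0) atTop
        (nhds (max 1 0)) := (tendsto_ratio 27).max tendsto_const_nhds
    rwa [max_eq_left (by norm_num)] at h2
  have hC : Tendsto (fun n : ℕ => ((6:ℝ)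
      / (8 * ∏ i ∈ Finset.range 3, (((n:ℝ) - i)/(n:ℝ))))) atTop
      (nhds ((6:ℝ) / (8 * 1))) := by
    apply Tendsto.div tendsto_const_nhds
      (tendsto_const_nhds.mul (tendsto_prod_ratio 3))
    norm_num
  have hG : Tendsto (fun n : ℕ => (max (((n:ℝ) - 27)/(n:ℝ)) 0)^3
      * ((6:ℝ) / (8 * ∏ i ∈ Finset.range 3, (((n:ℝ) - i)/(n:ℝ))))) atTop
      (nhds (1^3 * ((6:ℝ) / (8 * 1)))) := (hB.pow 3).mul hC
  have : (1:ℝ)^3 * ((6:ℝ)/(8*1)) = 3/4 := by norm_num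
  rw [this] at hG
  apply hG.congr'
  filter_upwards [eventually_ge_atTop 3] with n hn
  have hn1 : 1 ≤ n := le_trans (by omega) hn
  have hn0 : (0:ℝ) < (n:ℝ) := by exact_mod_cast hn1
  have hP : 0 < ∏ i ∈ Finset.range 3, ((n:ℝ) - i) := prod_ratio_pos hn
  have hfac : ((3:ℕ).factorial : ℝ) = 6 := by norm_num [Nat.factorial]
  have hch : (n.choose 3 : ℝ) = (∏ i ∈ Finset.range 3, ((n:ℝ) - i)) / 6 := by
    rw [eq_div_iff (by norm_num : (6:ℝ) ≠ 0)]
    have := cast_choose_prod (k := 3) hn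
    rwa [hfac] at this
  have hmax : max ((n:ℝ) - 27) 0 = (n:ℝ) * max (((n:ℝ) - 27)/(n:ℝ)) 0 := by
    rw [mul_max_of_nonneg _ _ hn0.le, mul_zero, mul_div_cancel₀ _ (ne_of_gt hn0)]
  rw [prod_ratio_eq hn1, hmax, mul_pow, hch]
  rw [eq_comm]
  field_simp

end Limits
open Filter

/-- for fixed `k ≥ 4`, if `p(Tr_k, T_j) → k!/2^(k(k-1)/2)`, then
`p(Tr_3, T_j) → 3/4`. -/
theorem tr3_density_of_minimizer (k : ℕ) (hk : 4 ≤ k)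
    (nn : ℕ → ℕ) (T : ∀ j, Tournament (nn j))
    (hn : Filter.Tendsto nn Filter.atTop Filter.atTop)
    (h : Filter.Tendsto (fun j => density (Tr k) (T j)) Filter.atTop
      (nhds ((k.factorial : ℝ) / 2 ^ (k * (k - 1) / 2)))) :
    Filter.Tendsto (fun j => density (Tr 3) (T j)) Filter.atTop (nhds (3 / 4)) := by
  classical
  obtain ⟨m, rfl⟩ : ∃ m, k = m + 4 := ⟨k - 4, by omega⟩
  clear hk
  have hexp : (m+4) * ((m+4) - 1) / 2 = (m+4).choose 2 := (Nat.choose_two_right (m+4)).symm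
  rw [hexp] at h
  set gk : ℝ := ((m+4).factorial : ℝ) / 2^((m+4).choose 2) with hgk
  have hgk_pos : 0 < gk := by
    rw [hgk]
    have : (0:ℝ) < ((m+4).factorial : ℝ) := by exact_mod_cast (m+4).factorial_pos
    positivity
  have hq : ∀ j, density (Tr 3) (T j) = (trCount 3 (T j) : ℝ) / ((nn j).choose 3 : ℝ) := by
    intro j; rw [density, Tournament.copyCount_Tr]
  have hdk : ∀ j, density (Tr (m+4)) (T j)
      = (trCount (m+4) (T j) : ℝ) / ((nn j).choose (m+4) : ℝ) := by
    intro j; rw [density, Tournament.copyCount_Tr]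
  rw [tendsto_order]
  constructor
  · -- lower bound: universal
    intro a ha
    have hlo := tendsto_lo.comp hn
    have h1 : ∀ᶠ j in atTop,
        a < (max ((nn j:ℝ) - 27) 0)^3 / (8 * (((nn j).choose 3) : ℝ)) := by
      have := hlo.eventually (eventually_gt_nhds ha)
      simpa [Function.comp] using this
    have h2 : ∀ᶠ j in atTop, 3 ≤ nn j := hn.eventually (eventually_ge_atTop 3)
    filter_upwards [h1, h2] with j hj hj3
    refine lt_of_lt_of_le hj ?_
    rw [hq j]
    have hc3 : (0:ℝ) < ((nn j).choose 3 : ℝ) := by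
      exact_mod_cast Nat.choose_pos hj3
    have key : (max ((nn j:ℝ) - 27) 0)^3 ≤ 8 * (trCount 3 (T j) : ℝ) := by
      have hu := Tournament.universal_lb 3 (T j)
      norm_num at hu
      exact hu
    rw [div_le_div_iff₀ (by positivity) hc3]
    calc (max ((nn j:ℝ) - 27) 0)^3 * ((nn j).choose 3 : ℝ)
        ≤ (8 * (trCount 3 (T j) : ℝ)) * ((nn j).choose 3 : ℝ) :=
          mul_le_mul_of_nonneg_right key hc3.le
      _ = (trCount 3 (T j) : ℝ) * (8 * ((nn j).choose 3 : ℝ)) := by ring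
  · -- upper bound: forcing
    intro y hy
    have hy0 : (0:ℝ) ≤ y := by linarith
    set M : ℕ := m + 2 with hMdef
    set L : ℝ := (1/2) * (y/3)^M * (((M+2).factorial : ℝ) / 2^(M.choose 2)) with hL
    have hch2 : (m+4).choose 2 = M.choose 2 + (2*M+1) := by
      rw [Nat.choose_two_right, Nat.choose_two_right, hMdef]
      have e : (m+4)*((m+4)-1) = (m+2)*((m+2)-1) + 2*(2*(m+2)+1) := by
        show (m+4)*(m+3) = (m+2)*(m+1) + 2*(2*(m+2)+1)
        ring
      rw [e, Nat.add_mul_div_left _ _ (by norm_num : 0 < 2)]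
    have hfac_pos : (0:ℝ) < ((m+4).factorial : ℝ) := by exact_mod_cast (m+4).factorial_pos
    have hLgk : L = gk * (4*y/3)^M := by
      rw [hL, hgk, hch2]
      have hMM : ((M+2).factorial : ℝ) = ((m+4).factorial : ℝ) := by norm_num [hMdef]
      rw [hMM]
      have e1 : (4*y/3)^M = 4^M * (y/3)^M := by
        rw [← mul_pow]; congr 1; ring
      have e2 : (4:ℝ)^M = 2^(2*M) := by
        rw [pow_mul]; norm_num
      rw [e1, e2, pow_add]
      have h2pos : (0:ℝ) < 2^(M.choose 2) := by positivity
      have h2pos' : (0:ℝ) < 2^(2*M+1) := by positivity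
      field_simp
      rw [pow_add]
      ring
    have hgkL : gk < L := by
      rw [hLgk]
      have h1lt : (1:ℝ) < (4*y/3)^M := by
        apply one_lt_pow₀
        · linarith
        · omega
      nlinarith
    set δ : ℝ := (L - gk)/2 with hδ
    have hδpos : 0 < δ := by rw [hδ]; linarith
    have hpsi := (tendsto_main M (3^M) y hy0).comp hn
    have h1 : ∀ᶠ j in atTop, gk + δ <
        ((nn j).choose 2 : ℝ) * (max (y*((nn j:ℝ)-2)/3 - 3^M) 0)^M
          / (2^(M.choose 2) * (((nn j).choose (M+2)) : ℝ)) := by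
      have := hpsi.eventually (eventually_gt_nhds (show gk + δ < L by rw [hδ]; linarith))
      simpa [Function.comp] using this
    have h2 : ∀ᶠ j in atTop, density (Tr (m+4)) (T j) < gk + δ :=
      h.eventually (eventually_lt_nhds (by linarith))
    have h3 : ∀ᶠ j in atTop, m + 4 ≤ nn j := hn.eventually (eventually_ge_atTop (m+4))
    filter_upwards [h1, h2, h3] with j hj1 hj2 hj3
    by_contra hcon
    push_neg at hcon
    -- arithmetic setup
    have hn3 : 3 ≤ nn j := by omega
    have hc2R : (0:ℝ) < ((nn j).choose 2 : ℝ) := by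
      exact_mod_cast Nat.choose_pos (by omega : 2 ≤ nn j)
    have hc3R : (0:ℝ) < ((nn j).choose 3 : ℝ) := by
      exact_mod_cast Nat.choose_pos hn3
    have hckR : (0:ℝ) < ((nn j).choose (m+4) : ℝ) := by
      exact_mod_cast Nat.choose_pos hj3
    have hqj : y ≤ (trCount 3 (T j):ℝ)/((nn j).choose 3:ℝ) := by
      rw [← hq j]; exact hcon
    have hyc3 : y * ((nn j).choose 3:ℝ) ≤ (trCount 3 (T j) : ℝ) := by
      rw [le_div_iff₀ hc3R] at hqj; exact hqj
    have hid : 3 * ((nn j).choose 3 : ℝ) = ((nn j).choose 2 : ℝ) * ((nn j:ℝ) - 2) := by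
      have hnat := Nat.choose_succ_right_eq (nn j) 2
      have : (((nn j).choose 3 * 3 : ℕ) : ℝ) = (((nn j).choose 2 * (nn j - 2) : ℕ) : ℝ) := by
        exact_mod_cast congrArg (Nat.cast (R := ℝ)) hnat
      push_cast [Nat.cast_sub (show 2 ≤ nn j by omega)] at this
      linarith
    have hinner : y * ((nn j : ℝ) - 2)/3 ≤ (trCount 3 (T j):ℝ)/((nn j).choose 2:ℝ) := by
      rw [div_le_div_iff₀ (by norm_num : (0:ℝ) < 3) hc2R]
      have h3' : y * (3 * ((nn j).choose 3:ℝ)) ≤ 3 * (trCount 3 (T j) : ℝ) := by linarith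
      rw [hid] at h3'
      nlinarith
    -- chain
    have htop := (T j).top_bound M
    have hmono : (max (y*((nn j:ℝ)-2)/3 - 3^M) 0)^M
        ≤ (max ((trCount 3 (T j):ℝ)/((nn j).choose 2:ℝ) - 3^M) 0)^M := by
      apply pow_le_pow_left₀ (le_max_right _ _)
      exact max_le_max (by linarith) le_rfl
    have h2e : (0:ℝ) < 2^(M.choose 2) := by positivity
    have hMk : M + 2 = m + 4 := by rw [hMdef]
    rw [hMk] at htop
    have hckR' : (0:ℝ) < ((nn j).choose (M+2) : ℝ) := by rw [hMk]; exact hckR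
    have hchain : ((nn j).choose 2 : ℝ) * (max (y*((nn j:ℝ)-2)/3 - 3^M) 0)^M
          / (2^(M.choose 2) * (((nn j).choose (M+2)) : ℝ))
        ≤ density (Tr (m+4)) (T j) := by
      rw [hdk j, hMk]
      calc ((nn j).choose 2 : ℝ) * (max (y*((nn j:ℝ)-2)/3 - 3^M) 0)^M
            / (2^(M.choose 2) * (((nn j).choose (m+4)) : ℝ))
          ≤ ((nn j).choose 2 : ℝ)
              * (max ((trCount 3 (T j):ℝ)/((nn j).choose 2:ℝ) - 3^M) 0)^M
            / (2^(M.choose 2) * (((nn j).choose (m+4)) : ℝ)) := by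
            apply (div_le_div_iff_of_pos_right (by positivity)).mpr
            exact mul_le_mul_of_nonneg_left hmono hc2R.le
        _ ≤ (2^(M.choose 2) * (trCount (m+4) (T j) : ℝ))
            / (2^(M.choose 2) * (((nn j).choose (m+4)) : ℝ)) := by
            apply (div_le_div_iff_of_pos_right (by positivity)).mpr
            exact htop
        _ = (trCount (m+4) (T j) : ℝ) / ((nn j).choose (m+4) : ℝ) := by
            rw [mul_div_mul_left _ _ (ne_of_gt h2e)]
    linarith
end
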